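/- arXiv:1609.05892 — 13 statements merged into one kernel-verified Lean document; each statement's English description precedes it below -/
import Mathlib

section
/- Let A be a nonzero symmetric composition algebra over a field F of characteristic ≠ 2, and let (g₁, g₂, g₃) be a triple of bijective F-linear maps of A satisfying the global triality relation g_j(xy) = (g_{j+1}x)(g_{j+2}y) for all x, y ∈ A and all j = 1, 2, 3 (indices modulo 3). Then each g_j is an isometry of the form: ⟨g_j x | g_j y⟩ = ⟨x | y⟩ for all x, y ∈ A and j = 1, 2, 3. -/
/-- In a nonzero symmetric composition algebra, every triple of
bijective linear maps `(g₁, g₂, g₃)` satisfying the global triality relation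
`g_j(xy) = (g_{j+1}x)(g_{j+2}y)` (indices mod 3) consists of isometries of the
bilinear form.  Paper subscripts `1, 2, 3` are encoded as `1, 2, 0 : Fin 3`. -/
theorem triality_group_isometry
    (F : Type*) [Field F] (h2 : (2 : F) ≠ 0)
    (A : Type*) [AddCommGroup A] [Module F A] [Nontrivial A]
    (mul : A →ₗ[F] A →ₗ[F] A)
    (B : LinearMap.BilinForm F A)
    (hBsymm : ∀ x y : A, B x y = B y x)
    (hBnd : B.Nondegenerate)
    (hcomp₁ : ∀ x y : A, mul (mul x y) x = B x x • y)
    (hcomp₂ : ∀ x y : A, mul x (mul y x) = B x x • y)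
    (hmult : ∀ x y : A, B (mul x y) (mul x y) = B x x * B y y)
    (hassoc : ∀ x y z : A, B (mul x y) z = B x (mul y z))
    (g : Fin 3 → (A ≃ₗ[F] A))
    (htri : ∀ (j : Fin 3) (x y : A),
      g j (mul x y) = mul (g (j + 1) x) (g (j + 2) y)) :
    ∀ (j : Fin 3) (x y : A), B (g j x) (g j y) = B x y := by
  obtain ⟨y₀, hy₀⟩ := exists_ne (0 : A)
  -- Step 1: each `g (j+2)` preserves the quadratic form `x ↦ B x x`.
  have key : ∀ (j : Fin 3) (x : A), B (g (j + 2) x) (g (j + 2) x) = B x x := by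
    intro j x
    have h1 := htri j (mul x y₀) x
    rw [hcomp₁, map_smul, htri (j + 1) x y₀] at h1
    have e1 : j + 1 + 1 = j + 2 := by rw [add_assoc, show (1 : Fin 3) + 1 = 2 from rfl]
    have e2 : j + 1 + 2 = j := by
      have : (1 : Fin 3) + 2 = 0 := rfl
      rw [add_assoc, this, add_zero]
    rw [e1, e2, hcomp₁] at h1
    -- h1 : B x x • g j y₀ = B (g (j+2) x) (g (j+2) x) • g j y₀
    have hne : g j y₀ ≠ 0 := by
      intro h
      exact hy₀ ((g j).map_eq_zero_iff.mp h)
    have := sub_smul (B (g (j + 2) x) (g (j + 2) x)) (B x x) (g j y₀)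
    rw [← h1, sub_self] at this
    rcases smul_eq_zero.mp this with hc | hv
    · exact sub_eq_zero.mp hc
    · exact absurd hv hne
  -- Step 2: every index has the form `j + 2`, so all `g j` preserve the quadratic form.
  have quad : ∀ (j : Fin 3) (x : A), B (g j x) (g j x) = B x x := by
    intro j x
    have e : j + 1 + 2 = j := by
      have : (1 : Fin 3) + 2 = 0 := rfl
      rw [add_assoc, this, add_zero]
    have := key (j + 1) x
    rwa [e] at this
  -- Step 3: polarize (characteristic ≠ 2).
  intro j x y
  have hq := quad j (x + y)
  rw [map_add] at hq
  simp only [map_add, LinearMap.add_apply] at hq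
  rw [quad j x, quad j y, hBsymm (g j y) (g j x), hBsymm y x] at hq
  have h2' : 2 * B (g j x) (g j y) = 2 * B x y := by
    linear_combination hq
  exact mul_left_cancel₀ h2 h2'
end

section
/- Let A be a symmetric composition algebra over a field F of characteristic ≠ 2, and let (t₁, t₂, t₃) be a triple of F-linear endomorphisms of A satisfying the local triality relation t_j(xy) = (t_{j+1}x)y + x(t_{j+2}y) for all x, y ∈ A and all j = 1, 2, 3 (indices modulo 3). Then each t_j is skew-adjoint with respect to the form: ⟨t_j x | y⟩ = −⟨x | t_j y⟩ for all x, y ∈ A and j = 1, 2, 3. -/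
/-- In a symmetric composition algebra, every triple of linear
endomorphisms `(t₁, t₂, t₃)` satisfying the local triality relation
`t_j(xy) = (t_{j+1}x)y + x(t_{j+2}y)` (indices mod 3) consists of maps
skew-adjoint with respect to the form.  Paper subscripts `1, 2, 3` are encoded
as `1, 2, 0 : Fin 3`. -/
theorem local_triality_skew_adjoint
    (F : Type*) [Field F] (h2 : (2 : F) ≠ 0)
    (A : Type*) [AddCommGroup A] [Module F A]
    (mul : A →ₗ[F] A →ₗ[F] A)
    (B : LinearMap.BilinForm F A)
    (hBsymm : ∀ x y : A, B x y = B y x)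
    (hBnd : B.Nondegenerate)
    (hcomp₁ : ∀ x y : A, mul (mul x y) x = B x x • y)
    (hcomp₂ : ∀ x y : A, mul x (mul y x) = B x x • y)
    (hmult : ∀ x y : A, B (mul x y) (mul x y) = B x x * B y y)
    (hassoc : ∀ x y z : A, B (mul x y) z = B x (mul y z))
    (t : Fin 3 → (A →ₗ[F] A))
    (htri : ∀ (j : Fin 3) (x y : A),
      t j (mul x y) = mul (t (j + 1) x) y + mul x (t (j + 2) y)) :
    ∀ (j : Fin 3) (x y : A), B (t j x) y = -(B x (t j y)) := by
  -- linearized composition identity: (uy)v + (vy)u = 2 B(u,v) • y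
  have hlin : ∀ u v y : A, mul (mul u y) v + mul (mul v y) u = (2 * B u v) • y := by
    intro u v y
    have h := hcomp₁ (u + v) y
    simp only [map_add, LinearMap.add_apply, hcomp₁ u y, hcomp₁ v y] at h
    have hs : B v u = B u v := hBsymm v u
    rw [hs] at h
    have h' : mul (mul u y) v + mul (mul v y) u
        = (B u u + B u v + (B u v + B v v)) • y - B u u • y - B v v • y := by
      rw [← h]; abel
    rw [h']
    have : (B u u + B u v + (B u v + B v v)) = 2 * B u v + B u u + B v v := by ring
    rw [this, add_smul, add_smul]
    abel
  have hkey : ∀ (k : Fin 3) (x : A), B (t k x) x = 0 := by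
    intro k x
    by_cases hA : ∀ z : A, z = 0
    · rw [hA (t k x)]; simp
    · push_neg at hA
      obtain ⟨z, hz⟩ := hA
      have e1 : k + 1 + 1 = k + 2 := by rw [add_assoc]; rfl
      have e2 : k + 1 + 2 = k := by
        have : (3 : Fin 3) = 0 := rfl
        rw [show k + 1 + 2 = k + 3 by rw [add_assoc]; rfl, this, add_zero]
      have e3 : k + 2 + 1 = k := by
        have : (3 : Fin 3) = 0 := rfl
        rw [show k + 2 + 1 = k + 3 by rw [add_assoc]; rfl, this, add_zero]
      have e4 : k + 2 + 2 = k + 1 := by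
        have : (4 : Fin 3) = 1 := rfl
        rw [show k + 2 + 2 = k + 4 by rw [add_assoc]; rfl, show k + 4 = k + (4:Fin 3) from rfl, this]
      have h1 := htri (k + 1) (mul x z) x
      rw [e1, e2] at h1
      have h2' := htri (k + 2) x z
      rw [e3, e4] at h2'
      have h3 : t (k + 1) (mul (mul x z) x) = B x x • t (k + 1) z := by
        rw [hcomp₁, map_smul]
      rw [h3, h2', map_add, LinearMap.add_apply] at h1
      -- h1 : B x x • t (k+1) z = mul (mul (t k x) z) x + mul (mul x (t (k+1) z)) x + mul (mul x z) (t k x)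
      have h4 : mul (mul (t k x) z) x + mul (mul x z) (t k x) = (2 * B (t k x) x) • z :=
        hlin (t k x) x z
      have h5 : mul (mul x (t (k + 1) z)) x = B x x • t (k + 1) z := hcomp₁ x _
      have h6 : (2 * B (t k x) x) • z = 0 := by
        have : B x x • t (k + 1) z =
            (mul (mul (t k x) z) x + mul (mul x z) (t k x)) + mul (mul x (t (k+1) z)) x := by
          rw [h1]; abel
        rw [h4, h5] at this
        exact add_eq_right.mp this.symm
      rcases smul_eq_zero.mp h6 with h | h
      · rcases mul_eq_zero.mp h with h | h
        · exact absurd h h2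
        · exact h
      · exact absurd h hz
  intro j x y
  have h := hkey j (x + y)
  simp only [map_add, LinearMap.add_apply] at h
  rw [hkey j x, hkey j y] at h
  have hs : B (t j y) x = B x (t j y) := hBsymm _ _
  rw [hs] at h
  linear_combination h
end

section
/- Let A be a regular triality algebra over a field F of characteristic ≠ 2 satisfying Condition (B) or Condition (C). Then for every triple (g₁, g₂, g₃) of bijective F-linear maps of A satisfying g_j(xy) = (g_{j+1}x)(g_{j+2}y) for all x, y ∈ A and all j (indices modulo 3), one has g_j ∘ d_k(x, y) ∘ g_j⁻¹ = d_k(g_{j−k}x, g_{j−k}y) for all j, k = 1, 2, 3 (indices modulo 3) and all x, y ∈ A. -/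
/-- Let `A` be a regular triality algebra over a field of
characteristic ≠ 2 satisfying Condition (B) or Condition (C).  Then for every
triple `(g₁, g₂, g₃)` of bijective linear maps satisfying the global triality
relation, one has `g_j ∘ d_k(x, y) ∘ g_j⁻¹ = d_k(g_{j−k}x, g_{j−k}y)` for all
`j, k` (mod 3).  Paper subscripts `1, 2, 3` are encoded as `1, 2, 0 : Fin 3`,
so `d 1 = d₁`, `d 2 = d₂`, `d 0 = d₃`. -/
theorem regular_triality_conjugation
    (F : Type*) [Field F] (h2 : (2 : F) ≠ 0)
    (A : Type*) [AddCommGroup A] [Module F A]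
    (mul : A →ₗ[F] A →ₗ[F] A)
    (d : Fin 3 → A → A → Module.End F A)
    -- d₁(x,y) = R(y)L(x) − R(x)L(y)
    (hd1 : ∀ x y z : A, d 1 x y z = mul (mul x z) y - mul (mul y z) x)
    -- d₂(x,y) = L(y)R(x) − L(x)R(y)
    (hd2 : ∀ x y z : A, d 2 x y z = mul y (mul z x) - mul x (mul z y))
    -- d₃ is antisymmetric
    (hd3 : ∀ x y : A, d 0 y x = -(d 0 x y))
    -- the triality derivation relation
    (hder : ∀ (j : Fin 3) (x y u v : A),
      d j x y (mul u v) = mul (d (j + 1) x y u) v + mul u (d (j + 2) x y v))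
    -- Condition (B) or Condition (C)
    (hBC : (Submodule.span F {z : A | ∃ x y : A, mul x y = z} = ⊤) ∨
      (∀ b : A, ((∀ y : A, mul b y = 0) ∨ (∀ y : A, mul y b = 0)) → b = 0))
    (g : Fin 3 → (A ≃ₗ[F] A))
    (htri : ∀ (j : Fin 3) (x y : A),
      g j (mul x y) = mul (g (j + 1) x) (g (j + 2) y)) :
    ∀ (j k : Fin 3) (x y z : A),
      g j (d k x y ((g j).symm z)) = d k (g (j - k) x) (g (j - k) y) z := by
  -- Fin 3 arithmetic facts
  have f311 : ∀ j : Fin 3, j + 1 + 1 = j + 2 := by decide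
  have f312 : ∀ j : Fin 3, j + 1 + 2 = j := by decide
  have f321 : ∀ j : Fin 3, j + 2 + 1 = j := by decide
  have f322 : ∀ j : Fin 3, j + 2 + 2 = j + 1 := by decide
  have e01 : (0 : Fin 3) + 1 = 1 := by decide
  have e02 : (0 : Fin 3) + 2 = 2 := by decide
  have e21 : (2 : Fin 3) + 1 = 0 := by decide
  have e22 : (2 : Fin 3) + 2 = 1 := by decide
  -- conjugation for d₁
  have K1 : ∀ (j : Fin 3) (x y w : A),
      g j (d 1 x y w) = d 1 (g (j + 2) x) (g (j + 2) y) (g j w) := by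
    intro j x y w
    rw [hd1 x y w, hd1 (g (j + 2) x) (g (j + 2) y) (g j w), map_sub,
      htri j (mul x w) y, htri j (mul y w) x,
      htri (j + 1) x w, htri (j + 1) y w]
    simp only [f311, f312]
  -- conjugation for d₂
  have K2 : ∀ (j : Fin 3) (x y w : A),
      g j (d 2 x y w) = d 2 (g (j + 1) x) (g (j + 1) y) (g j w) := by
    intro j x y w
    rw [hd2 x y w, hd2 (g (j + 1) x) (g (j + 1) y) (g j w), map_sub,
      htri j y (mul w x), htri j x (mul w y),
      htri (j + 2) w x, htri (j + 2) w y]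
    simp only [f321, f322]
  -- conjugation for d₃ on products
  have K0 : ∀ (j : Fin 3) (x y u v : A),
      g j (d 0 x y (mul u v)) = d 0 (g j x) (g j y) (g j (mul u v)) := by
    intro j x y u v
    have h0 := hder 0 x y u v
    rw [e01, e02] at h0
    have h0' := hder 0 (g j x) (g j y) (g (j + 1) u) (g (j + 2) v)
    rw [e01, e02] at h0'
    rw [htri j u v, h0, map_add, htri j (d 1 x y u) v, htri j u (d 2 x y v),
      K1 (j + 1) x y u, K2 (j + 2) x y v]
    simp only [f311, f312, f321, f322]
    rw [h0']
  -- conjugation for d₃ everywhere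
  have K0' : ∀ (j : Fin 3) (x y w : A),
      g j (d 0 x y w) = d 0 (g j x) (g j y) (g j w) := by
    intro j x y w
    rcases hBC with hB | hC
    · -- Condition (B): products span
      have hw : w ∈ Submodule.span F {z : A | ∃ x y : A, mul x y = z} := by
        rw [hB]; trivial
      induction hw using Submodule.span_induction with
      | mem z hz => obtain ⟨u, v, rfl⟩ := hz; exact K0 j x y u v
      | zero => simp
      | add a b _ _ ha hb => simp [map_add, ha, hb]
      | smul c a _ ha => simp [map_smul, ha]
    · -- Condition (C)
      have key : ∀ v : A,
          mul (g j (d 0 x y w) - d 0 (g j x) (g j y) (g j w)) v = 0 := by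
        intro v
        set v₀ := (g (j + 1)).symm v with hv₀
        have hvv : g (j + 1) v₀ = v := (g (j + 1)).apply_symm_apply v
        have h2a := hder 2 x y w v₀
        rw [e21, e22] at h2a
        have h2b := hder 2 (g j x) (g j y) (g j w) v
        rw [e21, e22] at h2b
        have happ := congrArg (g (j + 2)) h2a
        rw [K2 (j + 2) x y (mul w v₀), htri (j + 2) w v₀, map_add,
          htri (j + 2) (d 0 x y w) v₀, htri (j + 2) w (d 1 x y v₀),
          K1 (j + 2 + 2) x y v₀] at happ
        simp only [f311, f312, f321, f322, hvv] at happ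
        -- happ : d 2 (g j x) (g j y) (mul (g (j+2+1) w) v) = ...
        rw [map_sub, LinearMap.sub_apply, sub_eq_zero]
        have := happ.symm.trans h2b
        -- this : mul (g j (d 0 x y w)) v + X = mul (d 0 .. (g j w)) v + X
        exact add_right_cancel this
      have hb := hC _ (Or.inl key)
      exact sub_eq_zero.mp hb
  intro j k x y z
  fin_cases k
  · -- k = 0 : d₃
    have : j - 0 = j := by omega
    rw [show (⟨0, by omega⟩ : Fin 3) = (0 : Fin 3) from rfl]
    rw [sub_zero, K0' j x y ((g j).symm z), (g j).apply_symm_apply]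
  · rw [show (⟨1, by omega⟩ : Fin 3) = (1 : Fin 3) from rfl]
    rw [K1 j x y ((g j).symm z), (g j).apply_symm_apply,
      show j - 1 = j + 2 from by omega]
  · rw [show (⟨2, by omega⟩ : Fin 3) = (2 : Fin 3) from rfl]
    rw [K2 j x y ((g j).symm z), (g j).apply_symm_apply,
      show j - 2 = j + 1 from by omega]
end

section
/- Let A be the 2-dimensional symmetric composition algebra with basis e, f. (Forward direction) Let q₁, q₂, q₃ ∈ A satisfy ⟨q₁|q₁⟩ = ⟨q₂|q₂⟩ = ⟨q₃|q₃⟩ = 1 and ⟨q₃|q₁q₂⟩ = 0, and define p_j = −q_{j+1}q_{j+2} (indices modulo 3). Then for all j = 1, 2, 3: p_{j+1}p_{j+2} = p_j, p_{j+1}q_{j+2} = q_{j+1}p_{j+2} = −q_j, q_{j+1}q_{j+2} = −p_j, ⟨p_j|p_j⟩ = 1, and ⟨p_j|q_j⟩ = 0. (Converse) If p_j, q_j ∈ A satisfy all these relations together with ⟨q_j|q_j⟩ = 1, then ⟨q₃|q₁q₂⟩ = 0. -/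
/-- Proposition 2.3.  In the 2-dimensional symmetric
composition algebra with basis `e, f`, the triples `(p_j, q_j)` solving
Eqs. (2.11)–(2.12) are exactly those with `⟨q_j|q_j⟩ = 1`, `⟨q₃|q₁q₂⟩ = 0` and
`p_j = −q_{j+1}q_{j+2}`.  Paper subscripts `1, 2, 3` are encoded as
`1, 2, 0 : Fin 3` (so `q₃ = q 0`, `q₁ = q 1`, `q₂ = q 2`). -/
theorem two_dim_triality_solutions
    (F : Type*) [Field F] (h2 : (2 : F) ≠ 0)
    (A : Type*) [AddCommGroup A] [Module F A]
    (mul : A →ₗ[F] A →ₗ[F] A)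
    (B : LinearMap.BilinForm F A)
    (hBsymm : ∀ x y : A, B x y = B y x)
    (hBnd : B.Nondegenerate)
    (e f : A)
    (hspan : ∀ x : A, ∃ α β : F, x = α • e + β • f)
    (hee : mul e e = e) (hff : mul f f = -e)
    (hef : mul e f = -f) (hfe : mul f e = -f)
    (hBee : B e e = 1) (hBff : B f f = 1)
    (hBef : B e f = 0) (hBfe : B f e = 0)
    (hcomp₁ : ∀ x y : A, mul (mul x y) x = B x x • y)
    (hcomp₂ : ∀ x y : A, mul x (mul y x) = B x x • y)
    (hassoc : ∀ x y z : A, B (mul x y) z = B x (mul y z)) :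
    -- Forward direction
    (∀ q p : Fin 3 → A,
      (∀ j : Fin 3, B (q j) (q j) = 1) →
      B (q 0) (mul (q 1) (q 2)) = 0 →
      (∀ j : Fin 3, p j = -(mul (q (j + 1)) (q (j + 2)))) →
      ∀ j : Fin 3,
        mul (p (j + 1)) (p (j + 2)) = p j ∧
        mul (p (j + 1)) (q (j + 2)) = -(q j) ∧
        mul (q (j + 1)) (p (j + 2)) = -(q j) ∧
        mul (q (j + 1)) (q (j + 2)) = -(p j) ∧
        B (p j) (p j) = 1 ∧
        B (p j) (q j) = 0) ∧
    -- Converse direction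
    (∀ q p : Fin 3 → A,
      (∀ j : Fin 3, B (q j) (q j) = 1) →
      (∀ j : Fin 3,
        mul (p (j + 1)) (p (j + 2)) = p j ∧
        mul (p (j + 1)) (q (j + 2)) = -(q j) ∧
        mul (q (j + 1)) (p (j + 2)) = -(q j) ∧
        mul (q (j + 1)) (q (j + 2)) = -(p j) ∧
        B (p j) (p j) = 1 ∧
        B (p j) (q j) = 0) →
      B (q 0) (mul (q 1) (q 2)) = 0) := by
  constructor
  · -- Forward direction
    intro q p hq h0 hp j
    -- index arithmetic in Fin 3
    have i1 : ∀ k : Fin 3, k + 1 + 1 = k + 2 := by decide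
    have i2 : ∀ k : Fin 3, k + 1 + 2 = k := by decide
    have i3 : ∀ k : Fin 3, k + 2 + 1 = k := by decide
    have i4 : ∀ k : Fin 3, k + 2 + 2 = k + 1 := by decide
    -- composition property
    have comp : ∀ x y : A, B (mul x y) (mul x y) = B x x * B y y := by
      intro x y
      rw [hassoc, hcomp₂ y x, map_smul, smul_eq_mul, mul_comm]
    -- polarized version of hcomp₂
    have lin : ∀ x y z : A, mul x (mul y z) + mul z (mul y x) = (2 * B x z) • y := by
      intro x y z
      have h := hcomp₂ (x + z) y
      simp only [map_add, LinearMap.add_apply] at h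
      rw [hcomp₂ x y, hcomp₂ z y, hBsymm z x] at h
      linear_combination (norm := module) h
    -- all three cyclic orthogonality relations
    have horth : ∀ k : Fin 3, B (q k) (mul (q (k + 1)) (q (k + 2))) = 0 := by
      have step : ∀ k : Fin 3,
          B (q (k + 2)) (mul (q k) (q (k + 1))) =
          B (q k) (mul (q (k + 1)) (q (k + 2))) := by
        intro k
        exact (hBsymm _ _).trans (hassoc _ _ _)
      have e1 := step 1
      have e2 := step 2
      simp only [show (1:Fin 3)+2=0 by decide, show (1:Fin 3)+1=2 by decide,
        show (2:Fin 3)+2=1 by decide, show (2:Fin 3)+1=0 by decide] at e1 e2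
      intro k
      fin_cases k
      · exact h0
      · show B (q 1) (mul (q 2) (q 0)) = 0
        rw [← e1]; exact h0
      · show B (q 2) (mul (q 0) (q 1)) = 0
        rw [← e2, ← e1]; exact h0
    refine ⟨?_, ?_, ?_, ?_, ?_, ?_⟩
    · -- p_{j+1} p_{j+2} = p_j
      rw [hp (j + 1), hp (j + 2), hp j, i1, i2, i3, i4]
      simp only [map_neg, LinearMap.neg_apply, neg_neg]
      have L := lin (mul (q (j + 2)) (q j)) (q j) (q (j + 1))
      rw [hcomp₂ (q j) (q (j + 2)), hq, one_smul] at L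
      have hz : B (mul (q (j + 2)) (q j)) (q (j + 1)) = 0 := by
        rw [hassoc]
        have := horth (j + 2)
        rwa [i3, i4] at this
      rw [hz, mul_zero, zero_smul, add_eq_zero_iff_eq_neg] at L
      exact L
    · -- p_{j+1} q_{j+2} = -q_j
      rw [hp (j + 1), i1, i2]
      simp only [map_neg, LinearMap.neg_apply]
      rw [hcomp₁ (q (j + 2)) (q j), hq, one_smul]
    · -- q_{j+1} p_{j+2} = -q_j
      rw [hp (j + 2), i3, i4]
      simp only [map_neg]
      rw [hcomp₂ (q (j + 1)) (q j), hq, one_smul]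
    · -- q_{j+1} q_{j+2} = -p_j
      rw [hp j, neg_neg]
    · -- B(p_j, p_j) = 1
      rw [hp j]
      simp only [map_neg, LinearMap.neg_apply, neg_neg]
      rw [comp, hq, hq, one_mul]
    · -- B(p_j, q_j) = 0
      rw [hp j]
      simp only [map_neg, LinearMap.neg_apply, neg_eq_zero]
      rw [hassoc]
      have := horth (j + 1)
      rwa [i1, i2] at this
  · -- Converse direction
    intro q p hq hrel
    have h4 := (hrel 0).2.2.2.1
    have h6 := (hrel 0).2.2.2.2.2
    norm_num at h4 h6
    rw [h4, map_neg, hBsymm, h6, neg_zero]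
end

section
/- Let A be a symmetric composition algebra over a field F of characteristic ≠ 2, and let a = (a₁, a₂, a₃) ∈ Σ. Then for all x, y ∈ A and all j = 1, 2, 3 (indices modulo 3): σ_j(a)(xy) = (σ_{j+1}(a)x)(σ_{j+2}(a)y) and θ_j(a)(xy) = (θ_{j+1}(a)x)(θ_{j+2}(a)y); in particular both triples (σ₁(a), σ₂(a), σ₃(a)) and (θ₁(a), θ₂(a), θ₃(a)) satisfy the global triality relation. -/
/-- `σ_j(a) x = (x a_{j+2}) a_{j+1}` (paper Eq. (2.29a)). -/
def sigmaMap {F A : Type*} [Field F] [AddCommGroup A] [Module F A]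
    (mul : A →ₗ[F] A →ₗ[F] A) (a : Fin 3 → A) (j : Fin 3) (x : A) : A :=
  mul (mul x (a (j + 2))) (a (j + 1))

/-- `θ_j(a) x = a_{j+2} (a_{j+1} x)` (paper Eq. (2.29b)). -/
def thetaMap {F A : Type*} [Field F] [AddCommGroup A] [Module F A]
    (mul : A →ₗ[F] A →ₗ[F] A) (a : Fin 3 → A) (j : Fin 3) (x : A) : A :=
  mul (a (j + 2)) (mul (a (j + 1)) x)

/-- parts (i), (ii) of Theorem 2.5.  For `a ∈ Σ` the triples
`σ(a)` and `θ(a)` satisfy the global triality relation.  Paper subscripts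
`1, 2, 3` are encoded as `1, 2, 0 : Fin 3`. -/
theorem sigma_theta_global_triality
    (F : Type*) [Field F] (h2 : (2 : F) ≠ 0)
    (A : Type*) [AddCommGroup A] [Module F A]
    (mul : A →ₗ[F] A →ₗ[F] A)
    (B : LinearMap.BilinForm F A)
    (hBsymm : ∀ x y : A, B x y = B y x)
    (hBnd : B.Nondegenerate)
    (hcomp₁ : ∀ x y : A, mul (mul x y) x = B x x • y)
    (hcomp₂ : ∀ x y : A, mul x (mul y x) = B x x • y)
    (hmult : ∀ x y : A, B (mul x y) (mul x y) = B x x * B y y)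
    (hassoc : ∀ x y z : A, B (mul x y) z = B x (mul y z))
    (a : Fin 3 → A)
    (hSig : ∀ j : Fin 3, mul (a j) (a (j + 1)) = a (j + 2) ∧ B (a j) (a j) = 1) :
    ∀ (j : Fin 3) (x y : A),
      sigmaMap mul a j (mul x y) =
        mul (sigmaMap mul a (j + 1) x) (sigmaMap mul a (j + 2) y) ∧
      thetaMap mul a j (mul x y) =
        mul (thetaMap mul a (j + 1) x) (thetaMap mul a (j + 2) y) := by
  -- polarized composition laws
  have pol1 : ∀ x y z : A, mul (mul x y) z + mul (mul z y) x = (2 * B x z) • y := by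
    intro x y z
    have h := hcomp₁ (x + z) y
    have hx := hcomp₁ x y
    have hz := hcomp₁ z y
    simp only [map_add, LinearMap.add_apply] at h
    rw [hBsymm z x] at h
    linear_combination (norm := module) h - hx - hz
  have pol2 : ∀ x y z : A, mul x (mul y z) + mul z (mul y x) = (2 * B x z) • y := by
    intro x y z
    have h := hcomp₂ (x + z) y
    have hx := hcomp₂ x y
    have hz := hcomp₂ z y
    simp only [map_add, LinearMap.add_apply] at h
    rw [hBsymm z x] at h
    linear_combination (norm := module) h - hx - hz
  intro j x y
  -- index bookkeeping
  have e1 : j + 1 + 2 = j := by omega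
  have e2 : j + 1 + 1 = j + 2 := by omega
  have e3 : j + 2 + 2 = j + 1 := by omega
  have e4 : j + 2 + 1 = j := by omega
  set p := a j with hp
  set b := a (j + 1) with hb
  set c := a (j + 2) with hc
  have hab : mul p b = c := (hSig j).1
  have hbc : mul b c = p := by
    have h := (hSig (j + 1)).1
    rw [e2, e1] at h; exact h
  have hca : mul c p = b := by
    have h := (hSig (j + 2)).1
    rw [e4, e3] at h; exact h
  have nb : B b b = 1 := (hSig (j + 1)).2
  have nc : B c c = 1 := (hSig (j + 2)).2
  constructor
  · -- σ part : ((xy)c)b = ((xp)c)((yb)p)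
    show mul (mul (mul x y) c) b =
      mul (mul (mul x (a (j + 1 + 2))) (a (j + 1 + 1)))
          (mul (mul y (a (j + 2 + 2))) (a (j + 2 + 1)))
    rw [e1, e2, e3, e4, ← hp, ← hb, ← hc]
    have h3 : mul (mul x p) c = (2 * B x c) • p - mul b x := by
      have h := pol1 x p c; rw [hca] at h
      linear_combination (norm := module) h
    have h4 : mul (mul y b) p = (2 * B y p) • b - mul c y := by
      have h := pol1 y b p; rw [hab] at h
      linear_combination (norm := module) h
    rw [h3, h4]
    simp only [map_sub, map_smul, LinearMap.sub_apply, LinearMap.smul_apply, smul_sub,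
      smul_smul]
    have h1 := pol1 x y c
    have h1' := congrArg (fun t => mul t b) h1
    simp only [map_add, map_smul, LinearMap.add_apply, LinearMap.smul_apply] at h1'
    have h2' := pol1 (mul c y) x b
    have hB1 : B (mul c y) b = B y p := by
      rw [hassoc, hBsymm, hassoc, hbc]
    rw [hB1] at h2'
    have h5 : mul p (mul c y) = (2 * B y p) • c - mul y b := by
      have h := pol2 p c y; rw [hca, hBsymm p y] at h
      linear_combination (norm := module) h
    have h6 : mul (mul b x) b = x := by
      rw [hcomp₁, nb, one_smul]
    rw [hab, h5, h6]
    linear_combination (norm := module) h1' - h2'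
  · -- θ part : c(b(xy)) = (p(cx))(b(py))
    show mul c (mul b (mul x y)) =
      mul (mul (a (j + 1 + 2)) (mul (a (j + 1 + 1)) x))
          (mul (a (j + 2 + 2)) (mul (a (j + 2 + 1)) y))
    rw [e1, e2, e3, e4, ← hp, ← hb, ← hc]
    have g3 : mul p (mul c x) = (2 * B p x) • c - mul x b := by
      have h := pol2 p c x; rw [hca] at h
      linear_combination (norm := module) h
    have g4 : mul b (mul p y) = (2 * B b y) • p - mul y c := by
      have h := pol2 b p y; rw [hab] at h
      linear_combination (norm := module) h
    rw [g3, g4]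
    simp only [map_sub, map_smul, LinearMap.sub_apply, LinearMap.smul_apply, smul_sub,
      smul_smul]
    have g1 := pol2 b x y
    have g1' := congrArg (fun t => mul c t) g1
    simp only [map_add, map_smul] at g1'
    have g2 := pol2 c y (mul x b)
    have hB2 : B c (mul x b) = B x p := by
      rw [hBsymm, hassoc, hbc]
    rw [hB2] at g2
    have g5 : mul (mul x b) p = (2 * B p x) • b - mul c x := by
      have h := pol1 x b p; rw [hab, hBsymm x p] at h
      linear_combination (norm := module) h
    have g6 : mul c (mul y c) = y := by
      rw [hcomp₂, nc, one_smul]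
    rw [hca, g5, g6, hBsymm p x]
    linear_combination (norm := module) g1' - g2
end

section
/- Let A be a symmetric composition algebra over a field F of characteristic ≠ 2, and let a = (a₁, a₂, a₃) ∈ Σ. Then for all j = 1, 2, 3 (indices modulo 3): σ_j(a) ∘ θ_j(a) = θ_j(a) ∘ σ_j(a) = Id, and θ_j(a) ∘ θ_{j+1}(a) ∘ θ_{j+2}(a) = σ_{j+2}(a) ∘ σ_{j+1}(a) ∘ σ_j(a) = Id; in the course of the proof one also has σ_{j+2}(a) ∘ σ_{j+1}(a) = θ_j(a). -/
/-- parts (iii), (iv) of Theorem 2.5.  For `a ∈ Σ`: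
`σ_j(a)θ_j(a) = θ_j(a)σ_j(a) = Id`,
`θ_j(a)θ_{j+1}(a)θ_{j+2}(a) = σ_{j+2}(a)σ_{j+1}(a)σ_j(a) = Id`, and moreover
`σ_{j+2}(a)σ_{j+1}(a) = θ_j(a)`.  Paper subscripts `1, 2, 3` are encoded as
`1, 2, 0 : Fin 3`. -/
theorem sigma_theta_inverses
    (F : Type*) [Field F] (h2 : (2 : F) ≠ 0)
    (A : Type*) [AddCommGroup A] [Module F A]
    (mul : A →ₗ[F] A →ₗ[F] A)
    (B : LinearMap.BilinForm F A)
    (hBsymm : ∀ x y : A, B x y = B y x)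
    (hBnd : B.Nondegenerate)
    (hcomp₁ : ∀ x y : A, mul (mul x y) x = B x x • y)
    (hcomp₂ : ∀ x y : A, mul x (mul y x) = B x x • y)
    (hmult : ∀ x y : A, B (mul x y) (mul x y) = B x x * B y y)
    (hassoc : ∀ x y z : A, B (mul x y) z = B x (mul y z))
    (a : Fin 3 → A)
    (hSig : ∀ j : Fin 3, mul (a j) (a (j + 1)) = a (j + 2) ∧ B (a j) (a j) = 1) :
    ∀ (j : Fin 3) (x : A),
      sigmaMap mul a j (thetaMap mul a j x) = x ∧
      thetaMap mul a j (sigmaMap mul a j x) = x ∧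
      thetaMap mul a j (thetaMap mul a (j + 1) (thetaMap mul a (j + 2) x)) = x ∧
      sigmaMap mul a (j + 2) (sigmaMap mul a (j + 1) (sigmaMap mul a j x)) = x ∧
      sigmaMap mul a (j + 2) (sigmaMap mul a (j + 1) x) = thetaMap mul a j x := by

  have hmul : ∀ j : Fin 3, mul (a j) (a (j + 1)) = a (j + 2) := fun j => (hSig j).1
  have hnorm : ∀ j : Fin 3, B (a j) (a j) = 1 := fun j => (hSig j).2
  have e1 : ∀ k : Fin 3, k + 1 + 2 = k := by decide
  have e2 : ∀ k : Fin 3, k + 2 + 2 = k + 1 := by decide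
  have e3 : ∀ k : Fin 3, k + 2 + 1 = k := by decide
  have e4 : ∀ k : Fin 3, k + 1 + 1 = k + 2 := by decide
  have pcd : ∀ k : Fin 3, mul (a (k + 1)) (a (k + 2)) = a k := by
    intro k
    have h := hmul (k + 1)
    rwa [e4, e1] at h
  have pdb : ∀ k : Fin 3, mul (a (k + 2)) (a k) = a (k + 1) := by
    intro k
    have h := hmul (k + 2)
    rwa [e3, e2] at h
  have L1 : ∀ x y z : A, mul (mul x y) z = (2 * B x z) • y - mul (mul z y) x := by
    intro x y z
    have h := hcomp₁ (x + z) y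
    simp only [map_add, LinearMap.add_apply, hcomp₁ x y, hcomp₁ z y, hBsymm z x] at h
    linear_combination (norm := module) h
  have L2 : ∀ x y z : A, mul x (mul y z) = (2 * B x z) • y - mul z (mul y x) := by
    intro x y z
    have h := hcomp₂ (x + z) y
    simp only [map_add, LinearMap.add_apply, hcomp₂ x y, hcomp₂ z y, hBsymm z x] at h
    linear_combination (norm := module) h
  have hστ : ∀ (k : Fin 3) (x : A), sigmaMap mul a k (thetaMap mul a k x) = x := by
    intro k x
    simp only [sigmaMap, thetaMap, hcomp₁, hnorm, one_smul]
  have hθσ : ∀ (k : Fin 3) (x : A), thetaMap mul a k (sigmaMap mul a k x) = x := by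
    intro k x
    simp only [sigmaMap, thetaMap, hcomp₂, hnorm, one_smul]
  have key : ∀ (k : Fin 3) (x : A),
      sigmaMap mul a (k + 2) (sigmaMap mul a (k + 1) x) = thetaMap mul a k x := by
    intro k x
    simp only [sigmaMap, thetaMap, e1, e2, e3, e4]
    rw [L1 (mul x (a k)) (a (k + 2)) (a (k + 1)), pcd k,
      L2 (a (k + 2)) (a (k + 1)) x, pcd k, map_sub, LinearMap.sub_apply, map_smul,
      LinearMap.smul_apply, pdb k, hcomp₁ (a k) (mul x (a k)), hnorm, one_smul,
      hassoc x (a k) (a (k + 1)), hmul k, hBsymm (a (k + 2)) x]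
  intro j x
  refine ⟨hστ j x, hθσ j x, ?_, ?_, key j x⟩
  · have h1 : thetaMap mul a (j + 1) (thetaMap mul a (j + 2) x) = sigmaMap mul a j x := by
      rw [← key (j + 1) (thetaMap mul a (j + 2) x), e1, e4, hστ]
    rw [h1]
    exact hθσ j x
  · exact (key j (sigmaMap mul a j x)).trans (hθσ j x)
end

section
/- Let A be a symmetric composition algebra over a field F of characteristic ≠ 2, let a = (a₁, a₂, a₃) ∈ Σ and p = (p₁, p₂, p₃) ∈ Λ(a), and define q_j = a_{j+1} p_{j+2} for j = 1, 2, 3 (indices modulo 3). Then for all j: ⟨q_j | a_j⟩ = 0, a_j q_{j+1} + q_j a_{j+1} = q_{j+2} (so that q = (q₁, q₂, q₃) ∈ Λ(a)), and moreover p_j = q_{j+1} a_{j+2} = q_j − a_{j+1} q_{j+2}. -/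
/-- Lemma 3.1.  For `a ∈ Σ`, `p ∈ Λ(a)` and
`q_j = a_{j+1} p_{j+2}`, one has `⟨q_j|a_j⟩ = 0`,
`a_j q_{j+1} + q_j a_{j+1} = q_{j+2}` (so `q ∈ Λ(a)`), and conversely
`p_j = q_{j+1} a_{j+2} = q_j − a_{j+1} q_{j+2}`.  Paper subscripts `1, 2, 3`
are encoded as `1, 2, 0 : Fin 3`. -/
theorem lambda_q_triple
    (F : Type*) [Field F] (h2 : (2 : F) ≠ 0)
    (A : Type*) [AddCommGroup A] [Module F A]
    (mul : A →ₗ[F] A →ₗ[F] A)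
    (B : LinearMap.BilinForm F A)
    (hBsymm : ∀ x y : A, B x y = B y x)
    (hBnd : B.Nondegenerate)
    (hcomp₁ : ∀ x y : A, mul (mul x y) x = B x x • y)
    (hcomp₂ : ∀ x y : A, mul x (mul y x) = B x x • y)
    (hmult : ∀ x y : A, B (mul x y) (mul x y) = B x x * B y y)
    (hassoc : ∀ x y z : A, B (mul x y) z = B x (mul y z))
    (a : Fin 3 → A)
    (hSig : ∀ j : Fin 3, mul (a j) (a (j + 1)) = a (j + 2) ∧ B (a j) (a j) = 1)
    (p : Fin 3 → A)
    (hLam : ∀ j : Fin 3,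
      mul (a j) (p (j + 1)) + mul (p j) (a (j + 1)) = p (j + 2) ∧
      B (p j) (a j) = 0)
    (q : Fin 3 → A)
    (hq : ∀ j : Fin 3, q j = mul (a (j + 1)) (p (j + 2))) :
    ∀ j : Fin 3,
      B (q j) (a j) = 0 ∧
      mul (a j) (q (j + 1)) + mul (q j) (a (j + 1)) = q (j + 2) ∧
      p j = mul (q (j + 1)) (a (j + 2)) ∧
      p j = q j - mul (a (j + 1)) (q (j + 2)) := by
  have e1 : ∀ i : Fin 3, i + 1 + 1 = i + 2 := by decide
  have e2 : ∀ i : Fin 3, i + 1 + 2 = i := by decide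
  have e3 : ∀ i : Fin 3, i + 2 + 1 = i := by decide
  have e4 : ∀ i : Fin 3, i + 2 + 2 = i + 1 := by decide
  have lin : ∀ x x' y : A, mul x (mul y x') + mul x' (mul y x)
      = (B x x' + B x' x) • y := by
    intro x x' y
    have h := hcomp₂ (x + x') y
    simp only [map_add, LinearMap.add_apply, hcomp₂ x y, hcomp₂ x' y] at h
    linear_combination (norm := module) h
  intro j
  have hq1 : q j = mul (a (j + 1)) (p (j + 2)) := hq j
  have hq2 : q (j + 1) = mul (a (j + 2)) (p j) := by rw [hq (j + 1), e1, e2]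
  have hq3 : q (j + 2) = mul (a j) (p (j + 1)) := by rw [hq (j + 2), e3, e4]
  have ha12 : mul (a j) (a (j + 1)) = a (j + 2) := (hSig j).1
  have ha31 : mul (a (j + 2)) (a j) = a (j + 1) := by
    have h := (hSig (j + 2)).1; rwa [e3, e4] at h
  have hB2 : B (a (j + 1)) (a (j + 1)) = 1 := (hSig (j + 1)).2
  have hB3 : B (a (j + 2)) (a (j + 2)) = 1 := (hSig (j + 2)).2
  have hp3 : mul (a j) (p (j + 1)) + mul (p j) (a (j + 1)) = p (j + 2) := (hLam j).1
  have hpa1 : B (p j) (a j) = 0 := (hLam j).2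
  have hpa3 : B (p (j + 2)) (a (j + 2)) = 0 := (hLam (j + 2)).2
  refine ⟨?_, ?_, ?_, ?_⟩
  · rw [hq1, hBsymm, ← hassoc, ha12, hBsymm]; exact hpa3
  · rw [hq1, hq2, hq3]
    have k1 : mul (mul (a (j + 1)) (p (j + 2))) (a (j + 1)) = p (j + 2) := by
      rw [hcomp₁, hB2, one_smul]
    have k2 := lin (a j) (p j) (a (j + 2))
    rw [ha31, hBsymm (a j) (p j), hpa1] at k2
    rw [k1]
    linear_combination (norm := module) k2 - hp3
  · rw [hq2, hcomp₁, hB3, one_smul]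
  · rw [hq1, hq3, ← hp3, map_add, hcomp₂, hB2, one_smul]
    abel
end

section
/- Let A be a symmetric composition algebra over a field F of characteristic ≠ 2, let a = (a₁, a₂, a₃) ∈ Σ and p = (p₁, p₂, p₃) ∈ Λ(a), set q_j = a_{j+1} p_{j+2}, and define D_j(a,p) ∈ End_F(A) by D_j(a,p)x = (p_{j+1}x)a_{j+1} + a_j(x q_j) for j = 1, 2, 3 (indices modulo 3). Then the local triality relation holds: D_j(a,p)(xy) = (D_{j+1}(a,p)x)y + x(D_{j+2}(a,p)y) for all x, y ∈ A and all j = 1, 2, 3. -/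
section
variable {F : Type*} [Field F] {A : Type*} [AddCommGroup A] [Module F A]
variable (mul : A →ₗ[F] A →ₗ[F] A) (B : LinearMap.BilinForm F A)

lemma L1 (hBsymm : ∀ x y : A, B x y = B y x)
    (hcomp₁ : ∀ x y : A, mul (mul x y) x = B x x • y) :
    ∀ x y z : A, mul (mul x y) z + mul (mul z y) x = (2 * B x z) • y := by
  intro x y z
  have h := hcomp₁ (x + z) y
  simp only [map_add, LinearMap.add_apply] at h
  linear_combination (norm := module) h - hcomp₁ x y - hcomp₁ z y + (hBsymm z x) • y

lemma L2 (hBsymm : ∀ x y : A, B x y = B y x)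
    (hcomp₂ : ∀ x y : A, mul x (mul y x) = B x x • y) :
    ∀ x y z : A, mul x (mul y z) + mul z (mul y x) = (2 * B x z) • y := by
  intro x y z
  have h := hcomp₂ (x + z) y
  simp only [map_add, LinearMap.add_apply] at h
  linear_combination (norm := module) h - hcomp₂ x y - hcomp₂ z y + (hBsymm z x) • y

lemma Blin1 (h2 : (2:F) ≠ 0) (hBsymm : ∀ x y : A, B x y = B y x)
    (hmult : ∀ x y : A, B (mul x y) (mul x y) = B x x * B y y) :
    ∀ x y u : A, B (mul x u) (mul y u) = B x y * B u u := by
  intro x y u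
  have h := hmult (x + y) u
  simp only [map_add, LinearMap.add_apply] at h
  have key : 2 * B (mul x u) (mul y u) = 2 * (B x y * B u u) := by
    linear_combination h - hmult x u - hmult y u + hBsymm (mul x u) (mul y u)
      + B u u * hBsymm y x
  exact mul_left_cancel₀ h2 key

lemma Blin (h2 : (2:F) ≠ 0) (hBsymm : ∀ x y : A, B x y = B y x)
    (hmult : ∀ x y : A, B (mul x y) (mul x y) = B x x * B y y) :
    ∀ x y u v : A, B (mul x u) (mul y v) + B (mul y u) (mul x v)
      = 2 * (B x y * B u v) := by
  intro x y u v
  have h := Blin1 mul B h2 hBsymm hmult x y (u + v)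
  simp only [map_add, LinearMap.add_apply] at h
  linear_combination h - Blin1 mul B h2 hBsymm hmult x y u - Blin1 mul B h2 hBsymm hmult x y v
    + hBsymm (mul y u) (mul x v) + B x y * hBsymm v u


lemma rot1 (hBsymm : ∀ x y : A, B x y = B y x)
    (hassoc : ∀ x y z : A, B (mul x y) z = B x (mul y z)) :
    ∀ x y z : A, B (mul x y) z = B y (mul z x) := by
  intro x y z
  rw [hassoc, hBsymm, hassoc]

lemma Qq (hBsymm : ∀ x y : A, B x y = B y x)
    (hcomp₂ : ∀ x y : A, mul x (mul y x) = B x x • y) :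
    ∀ u x y : A, mul (mul y u) (mul u x)
      = (2 * B (mul y u) x) • u - (B u u) • (mul x y) := by
  intro u x y
  have h := L2 mul B hBsymm hcomp₂ (mul y u) u x
  rw [hcomp₂ u y, map_smul] at h
  linear_combination (norm := module) h

lemma Qlin (hBsymm : ∀ x y : A, B x y = B y x)
    (hcomp₂ : ∀ x y : A, mul x (mul y x) = B x x • y) :
    ∀ u v x y : A, mul (mul y u) (mul v x) + mul (mul y v) (mul u x)
      = (2 * B (mul y u) x) • v + (2 * B (mul y v) x) • u
        - (2 * B u v) • (mul x y) := by
  intro u v x y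
  have h := Qq mul B hBsymm hcomp₂ (u + v) x y
  simp only [map_add, LinearMap.add_apply] at h
  linear_combination (norm := module) h - Qq mul B hBsymm hcomp₂ u x y
    - Qq mul B hBsymm hcomp₂ v x y + (hBsymm u v) • (mul x y)

lemma starId (hBsymm : ∀ x y : A, B x y = B y x)
    (hcomp₁ : ∀ x y : A, mul (mul x y) x = B x x • y)
    (hcomp₂ : ∀ x y : A, mul x (mul y x) = B x x • y)
    (hassoc : ∀ x y z : A, B (mul x y) z = B x (mul y z)) :
    ∀ u v x y : A, mul (mul (mul v x) u) y + mul x (mul u (mul y v))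
      = (2 * B v (mul x y)) • u - (2 * B u (mul x y)) • v
        + (2 * B u v) • (mul x y) := by
  intro u v x y
  have hA := L1 mul B hBsymm hcomp₁ (mul v x) u y
  have hB := L2 mul B hBsymm hcomp₂ x u (mul y v)
  have hC := Qlin mul B hBsymm hcomp₂ u v x y
  rw [hassoc v x y] at hA
  rw [show B x (mul y v) = B v (mul x y) by
    rw [← hassoc, hBsymm, ← hassoc, hBsymm]] at hB
  rw [show B (mul y u) x = B u (mul x y) from rot1 mul B hBsymm hassoc y u x,
    show B (mul y v) x = B v (mul x y) from rot1 mul B hBsymm hassoc y v x] at hC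
  linear_combination (norm := module) hA + hB - hC

lemma tri_shift (hBnd : B.Nondegenerate)
    (hassoc : ∀ x y z : A, B (mul x y) z = B x (mul y z))
    (d0 d1 d2 : A → A)
    (h0 : ∀ x z, B (d0 x) z = - B x (d0 z))
    (h2' : ∀ x z, B (d2 x) z = - B x (d2 z))
    (htri : ∀ x y, d0 (mul x y) = mul (d1 x) y + mul x (d2 y)) :
    ∀ x y, d2 (mul x y) = mul (d0 x) y + mul x (d1 y) := by
  intro x y
  have key : ∀ z, B (d2 (mul x y) - (mul (d0 x) y + mul x (d1 y))) z = 0 := by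
    intro z
    have hsub : mul y (d2 z) = d0 (mul y z) - mul (d1 y) z := by
      rw [htri y z]; abel
    have t3 : B x (mul y (d2 z)) = B x (d0 (mul y z)) - B x (mul (d1 y) z) := by
      rw [hsub, map_sub]
    have goal1 : B (d2 (mul x y)) z = B (mul (d0 x) y) z + B (mul x (d1 y)) z := by
      linear_combination h2' (mul x y) z - hassoc x y (d2 z) - t3
        - h0 x (mul y z) - hassoc (d0 x) y z - hassoc x (d1 y) z
    simp only [map_sub, map_add, LinearMap.sub_apply, LinearMap.add_apply]
    linear_combination goal1
  have h := hBnd.1 _ key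
  exact sub_eq_zero.mp h

lemma skew_sigma (hBsymm : ∀ x y : A, B x y = B y x) :
    ∀ u v x z : A, B ((2 * B u x) • v - (2 * B v x) • u) z
      = - B x ((2 * B u z) • v - (2 * B v z) • u) := by
  intro u v x z
  simp only [map_sub, map_smul, LinearMap.sub_apply, LinearMap.smul_apply,
    smul_eq_mul]
  linear_combination (2 * B v z) * hBsymm u x - (2 * B u z) * hBsymm v x

lemma skew_d1 (h2 : (2:F) ≠ 0) (hBsymm : ∀ x y : A, B x y = B y x)
    (hmult : ∀ x y : A, B (mul x y) (mul x y) = B x x * B y y)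
    (hassoc : ∀ x y z : A, B (mul x y) z = B x (mul y z)) :
    ∀ u v x z : A, B ((B u v) • x - mul (mul v x) u) z
      = - B x ((B u v) • z - mul (mul v z) u) := by
  intro u v x z
  simp only [map_sub, map_smul, LinearMap.sub_apply, LinearMap.smul_apply,
    smul_eq_mul]
  have e1 := hassoc (mul v x) u z
  have e2 : B x (mul (mul v z) u) = B (mul v z) (mul u x) := by
    rw [hBsymm, hassoc]
  have e3 := Blin mul B h2 hBsymm hmult v u x z
  have e4 := hBsymm (mul u x) (mul v z)
  have e5 := hBsymm u v
  linear_combination -e1 - e2 - e3 + e4 + 2 * B x z * e5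

lemma skew_d2 (h2 : (2:F) ≠ 0) (hBsymm : ∀ x y : A, B x y = B y x)
    (hmult : ∀ x y : A, B (mul x y) (mul x y) = B x x * B y y)
    (hassoc : ∀ x y z : A, B (mul x y) z = B x (mul y z)) :
    ∀ u v x z : A, B ((B u v) • x - mul u (mul x v)) z
      = - B x ((B u v) • z - mul u (mul z v)) := by
  intro u v x z
  simp only [map_sub, map_smul, LinearMap.sub_apply, LinearMap.smul_apply,
    smul_eq_mul]
  have e1 : B (mul u (mul x v)) z = B (mul z u) (mul x v) := by
    rw [hBsymm, hassoc]
  have e2 : B x (mul u (mul z v)) = B (mul x u) (mul z v) := by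
    rw [← hassoc]
  have e3 := Blin mul B h2 hBsymm hmult z x u v
  have e4 := hBsymm (mul z u) (mul x v)
  have e5 := hBsymm z x
  linear_combination -e1 - e2 - e3 - 2 * B u v * e5

lemma tri0 (hBsymm : ∀ x y : A, B x y = B y x)
    (hcomp₁ : ∀ x y : A, mul (mul x y) x = B x x • y)
    (hcomp₂ : ∀ x y : A, mul x (mul y x) = B x x • y)
    (hassoc : ∀ x y z : A, B (mul x y) z = B x (mul y z)) :
    ∀ u v x y : A, (2 * B u (mul x y)) • v - (2 * B v (mul x y)) • u
      = mul ((B u v) • x - mul (mul v x) u) y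
        + mul x ((B u v) • y - mul u (mul y v)) := by
  intro u v x y
  have h := starId mul B hBsymm hcomp₁ hcomp₂ hassoc u v x y
  simp only [map_sub, map_smul, LinearMap.sub_apply, LinearMap.smul_apply]
  linear_combination (norm := module) h

lemma triA (h2 : (2:F) ≠ 0) (hBnd : B.Nondegenerate)
    (hBsymm : ∀ x y : A, B x y = B y x)
    (hcomp₁ : ∀ x y : A, mul (mul x y) x = B x x • y)
    (hcomp₂ : ∀ x y : A, mul x (mul y x) = B x x • y)
    (hmult : ∀ x y : A, B (mul x y) (mul x y) = B x x * B y y)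
    (hassoc : ∀ x y z : A, B (mul x y) z = B x (mul y z)) :
    ∀ u v x y : A, (B u v) • (mul x y) - mul u (mul (mul x y) v)
      = mul ((2 * B u x) • v - (2 * B v x) • u) y
        + mul x ((B u v) • y - mul (mul v y) u) := by
  intro u v
  exact tri_shift mul B hBnd hassoc
    (fun w => (2 * B u w) • v - (2 * B v w) • u)
    (fun w => (B u v) • w - mul (mul v w) u)
    (fun w => (B u v) • w - mul u (mul w v))
    (skew_sigma B hBsymm u v)
    (skew_d2 mul B h2 hBsymm hmult hassoc u v)
    (tri0 mul B hBsymm hcomp₁ hcomp₂ hassoc u v)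

lemma triB (h2 : (2:F) ≠ 0) (hBnd : B.Nondegenerate)
    (hBsymm : ∀ x y : A, B x y = B y x)
    (hcomp₁ : ∀ x y : A, mul (mul x y) x = B x x • y)
    (hcomp₂ : ∀ x y : A, mul x (mul y x) = B x x • y)
    (hmult : ∀ x y : A, B (mul x y) (mul x y) = B x x * B y y)
    (hassoc : ∀ x y z : A, B (mul x y) z = B x (mul y z)) :
    ∀ u v x y : A, (B u v) • (mul x y) - mul (mul v (mul x y)) u
      = mul ((B u v) • x - mul u (mul x v)) y
        + mul x ((2 * B u y) • v - (2 * B v y) • u) := by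
  intro u v
  exact tri_shift mul B hBnd hassoc
    (fun w => (B u v) • w - mul u (mul w v))
    (fun w => (2 * B u w) • v - (2 * B v w) • u)
    (fun w => (B u v) • w - mul (mul v w) u)
    (skew_d2 mul B h2 hBsymm hmult hassoc u v)
    (skew_d1 mul B h2 hBsymm hmult hassoc u v)
    (triA mul B h2 hBnd hBsymm hcomp₁ hcomp₂ hmult hassoc u v)

lemma main_aux (h2 : (2:F) ≠ 0) (hBnd : B.Nondegenerate)
    (hBsymm : ∀ x y : A, B x y = B y x)
    (hcomp₁ : ∀ x y : A, mul (mul x y) x = B x x • y)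
    (hcomp₂ : ∀ x y : A, mul x (mul y x) = B x x • y)
    (hmult : ∀ x y : A, B (mul x y) (mul x y) = B x x * B y y)
    (hassoc : ∀ x y z : A, B (mul x y) z = B x (mul y z))
    (a1 a2 a3 p1 p2 p3 : A)
    (ha1 : mul a1 a2 = a3) (ha2 : mul a2 a3 = a1) (ha3 : mul a3 a1 = a2)
    (hl1 : mul a1 p2 + mul p1 a2 = p3)
    (hl2 : mul a2 p3 + mul p2 a3 = p1)
    (hl3 : mul a3 p1 + mul p3 a1 = p2)
    (ho1 : B p1 a1 = 0) (ho2 : B p2 a2 = 0) (ho3 : B p3 a3 = 0) :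
    ∀ x y : A,
      mul (mul p2 (mul x y)) a2 + mul a1 (mul (mul x y) (mul a2 p3))
        = mul (mul (mul p3 x) a3 + mul a2 (mul x (mul a3 p1))) y
          + mul x (mul (mul p1 y) a1 + mul a3 (mul y (mul a1 p2))) := by
  intro x y
  have horthA : B a2 p2 = 0 := by rw [hBsymm]; exact ho2
  have horthB : B a1 (mul a2 p3) = 0 := by
    rw [← hassoc, ha1, hBsymm]; exact ho3
  have T1 := triB mul B h2 hBnd hBsymm hcomp₁ hcomp₂ hmult hassoc a2 p2 x y
  have T2 := triA mul B h2 hBnd hBsymm hcomp₁ hcomp₂ hmult hassoc a1 (mul a2 p3) x y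
  rw [horthA] at T1
  rw [horthB] at T2
  simp only [zero_smul, zero_sub, sub_zero, map_sub, map_smul, map_neg,
    LinearMap.sub_apply, LinearMap.smul_apply, LinearMap.neg_apply] at T1 T2
  -- identity E1
  have c1 : B a2 (mul p3 a1) = 0 := by rw [← hassoc, hBsymm]; exact horthB
  have c2 : B (mul p3 a1) a2 = 0 := by rw [hBsymm]; exact c1
  have c3 : 2 * B (mul a2 p3) x = 2 * B (mul p3 x) a2 := by
    rw [hassoc a2 p3 x, hBsymm]
  have s1' : mul a2 (mul x (mul a3 p1))
      = mul a2 (mul x p2) - mul a2 (mul x (mul p3 a1)) := by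
    have h3 : mul a3 p1 = p2 - mul p3 a1 := by
      linear_combination (norm := module) hl3
    rw [h3, map_sub, map_sub]
  have s2 : mul a2 (mul x (mul p3 a1)) = - mul (mul p3 a1) (mul x a2) := by
    have h := L2 mul B hBsymm hcomp₂ a2 x (mul p3 a1)
    rw [c1] at h
    linear_combination (norm := module) h
  have s3 := Qlin mul B hBsymm hcomp₂ a1 x a2 p3
  rw [ha1, c2] at s3
  have E1 : mul a2 (mul x p2) - (2 * B a1 x) • (mul a2 p3)
        + (2 * B (mul a2 p3) x) • a1
      = mul (mul p3 x) a3 + mul a2 (mul x (mul a3 p1)) := by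
    linear_combination (norm := module) -s1' + s2 - s3 + c3 • a1
  -- identity E2
  have c4 : B a3 p3 = 0 := by rw [hBsymm]; exact ho3
  have c5 : B a3 (mul p1 a2) = 0 := by
    rw [hBsymm, hassoc, ha2]; exact ho1
  have c6 : B (mul a2 p3) a1 = 0 := by rw [hBsymm]; exact horthB
  have c7 : B (mul p1 a2) a3 = 0 := by rw [hassoc, ha2]; exact ho1
  have d1 : B (mul a1 y) p3 = B (mul p3 a1) y := by
    rw [hassoc p3 a1 y, hBsymm]
  have d2 : B (mul p1 y) a3 = B (mul a3 p1) y := by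
    rw [hassoc a3 p1 y, hBsymm]
  have d3' : 2 * B y a2 = 2 * B a2 y := by rw [hBsymm y a2]
  have e : 2 * B (mul a1 y) p3 + 2 * B (mul p1 y) a3 = 2 * B p2 y := by
    have h := congrArg (fun w => 2 * B w y) hl3
    simp only [map_add, LinearMap.add_apply] at h
    linear_combination h + 2 * d1 + 2 * d2
  have u1' : mul a3 (mul y (mul a1 p2))
      = mul a3 (mul y p3) - mul a3 (mul y (mul p1 a2)) := by
    have h : mul a1 p2 = p3 - mul p1 a2 := by
      linear_combination (norm := module) hl1
    rw [h, map_sub, map_sub]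
  have u2 : mul a3 (mul y p3) = - mul p3 (mul y a3) := by
    have h := L2 mul B hBsymm hcomp₂ a3 y p3
    rw [c4] at h
    linear_combination (norm := module) h
  have u3 : mul a3 (mul y (mul p1 a2)) = - mul (mul p1 a2) (mul y a3) := by
    have h := L2 mul B hBsymm hcomp₂ a3 y (mul p1 a2)
    rw [c5] at h
    linear_combination (norm := module) h
  have u4 : mul (mul (mul a2 p3) y) a1 = - mul (mul a1 y) (mul a2 p3) := by
    have h := L1 mul B hBsymm hcomp₁ (mul a2 p3) y a1
    rw [c6] at h
    linear_combination (norm := module) h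
  have u5 := Qlin mul B hBsymm hcomp₂ a2 y a3 p1
  rw [ha2, c7] at u5
  have u6 := Qlin mul B hBsymm hcomp₂ y a2 p3 a1
  rw [ha1, c4] at u6
  have E2 : mul (mul (mul a2 p3) y) a1 - (2 * B a2 y) • p2 + (2 * B p2 y) • a2
      = mul (mul p1 y) a1 + mul a3 (mul y (mul a1 p2)) := by
    linear_combination (norm := module) u4 - u6 - u1' + u3 - u5 - e • a2
      + (2 * B a2 y) • hl3 + d3' • (mul p3 a1)
  -- assemble
  have E1y := congrArg (fun w => mul w y) E1
  simp only [map_add, map_sub, map_smul, LinearMap.add_apply,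
    LinearMap.sub_apply, LinearMap.smul_apply] at E1y
  have E2x := congrArg (fun w => mul x w) E2
  simp only [map_add, map_sub, map_smul] at E2x
  simp only [map_add, LinearMap.add_apply]
  linear_combination (norm := module) E1y + E2x - T1 - T2

end

/-- Theorem 3.2.  For `a ∈ Σ`, `p ∈ Λ(a)`,
`q_j = a_{j+1} p_{j+2}`, the maps `D_j(a,p)x = (p_{j+1}x)a_{j+1} + a_j(x q_j)`
satisfy the local triality relation
`D_j(a,p)(xy) = (D_{j+1}(a,p)x)y + x(D_{j+2}(a,p)y)`.  Paper subscripts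
`1, 2, 3` are encoded as `1, 2, 0 : Fin 3`. -/
theorem D_local_triality
    (F : Type*) [Field F] (h2 : (2 : F) ≠ 0)
    (A : Type*) [AddCommGroup A] [Module F A]
    (mul : A →ₗ[F] A →ₗ[F] A)
    (B : LinearMap.BilinForm F A)
    (hBsymm : ∀ x y : A, B x y = B y x)
    (hBnd : B.Nondegenerate)
    (hcomp₁ : ∀ x y : A, mul (mul x y) x = B x x • y)
    (hcomp₂ : ∀ x y : A, mul x (mul y x) = B x x • y)
    (hmult : ∀ x y : A, B (mul x y) (mul x y) = B x x * B y y)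
    (hassoc : ∀ x y z : A, B (mul x y) z = B x (mul y z))
    (a : Fin 3 → A)
    (hSig : ∀ j : Fin 3, mul (a j) (a (j + 1)) = a (j + 2) ∧ B (a j) (a j) = 1)
    (p : Fin 3 → A)
    (hLam : ∀ j : Fin 3,
      mul (a j) (p (j + 1)) + mul (p j) (a (j + 1)) = p (j + 2) ∧
      B (p j) (a j) = 0)
    (q : Fin 3 → A)
    (hq : ∀ j : Fin 3, q j = mul (a (j + 1)) (p (j + 2)))
    (D : Fin 3 → A → A)
    (hD : ∀ (j : Fin 3) (x : A),
      D j x = mul (mul (p (j + 1)) x) (a (j + 1)) + mul (a j) (mul x (q j))) :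
    ∀ (j : Fin 3) (x y : A),
      D j (mul x y) = mul (D (j + 1) x) y + mul x (D (j + 2) y) := by
  intro j x y
  have e1 : j + 1 + 1 = j + 2 := by
    rw [add_assoc, show (1 : Fin 3) + 1 = 2 by decide]
  have e2 : j + 1 + 2 = j := by
    rw [add_assoc, show (1 : Fin 3) + 2 = 0 by decide, add_zero]
  have e3 : j + 2 + 1 = j := by
    rw [add_assoc, show (2 : Fin 3) + 1 = 0 by decide, add_zero]
  have e4 : j + 2 + 2 = j + 1 := by
    rw [add_assoc, show (2 : Fin 3) + 2 = 1 by decide]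
  have ha1 := (hSig j).1
  have ha2 := (hSig (j + 1)).1
  rw [e1, e2] at ha2
  have ha3 := (hSig (j + 2)).1
  rw [e3, e4] at ha3
  have hl1 := (hLam j).1
  have hl2 := (hLam (j + 1)).1
  rw [e1, e2] at hl2
  have hl3 := (hLam (j + 2)).1
  rw [e3, e4] at hl3
  have ho1 := (hLam j).2
  have ho2 := (hLam (j + 1)).2
  have ho3 := (hLam (j + 2)).2
  rw [hD j, hD (j + 1), hD (j + 2), hq j, hq (j + 1), hq (j + 2), e1, e2, e3, e4]
  exact main_aux mul B h2 hBnd hBsymm hcomp₁ hcomp₂ hmult hassoc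
    (a j) (a (j + 1)) (a (j + 2)) (p j) (p (j + 1)) (p (j + 2))
    ha1 ha2 ha3 hl1 hl2 hl3 ho1 ho2 ho3 x y
end

section
/- Let A be a symmetric composition algebra over a field F of characteristic ≠ 2, let a = (a₁, a₂, a₃) ∈ Σ and p = (p₁, p₂, p₃) ∈ Λ(a), set q_j = a_{j+1} p_{j+2}, and define D_j(a,p)x = (p_{j+1}x)a_{j+1} + a_j(x q_j). Then for all x ∈ A and all j = 1, 2, 3 (indices modulo 3): D_j(a,p)x = 2⟨q_{j+2}|x⟩a_{j+2} − 2⟨a_{j+2}|x⟩q_{j+2} + a_j(x p_j) = 2⟨p_{j+2}|x⟩a_{j+2} − 2⟨a_{j+2}|x⟩p_{j+2} + (q_{j+1}x)a_{j+1}. -/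
/-- Lemma 3.3.  For `a ∈ Σ`, `p ∈ Λ(a)`,
`q_j = a_{j+1} p_{j+2}` and `D_j(a,p)x = (p_{j+1}x)a_{j+1} + a_j(x q_j)`, one
has the two alternative expressions
`D_j(a,p)x = 2⟨q_{j+2}|x⟩a_{j+2} − 2⟨a_{j+2}|x⟩q_{j+2} + a_j(x p_j)`
`          = 2⟨p_{j+2}|x⟩a_{j+2} − 2⟨a_{j+2}|x⟩p_{j+2} + (q_{j+1}x)a_{j+1}`.
Paper subscripts `1, 2, 3` are encoded as `1, 2, 0 : Fin 3`. -/
theorem D_alternative_formulas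
    (F : Type*) [Field F] (h2 : (2 : F) ≠ 0)
    (A : Type*) [AddCommGroup A] [Module F A]
    (mul : A →ₗ[F] A →ₗ[F] A)
    (B : LinearMap.BilinForm F A)
    (hBsymm : ∀ x y : A, B x y = B y x)
    (hBnd : B.Nondegenerate)
    (hcomp₁ : ∀ x y : A, mul (mul x y) x = B x x • y)
    (hcomp₂ : ∀ x y : A, mul x (mul y x) = B x x • y)
    (hmult : ∀ x y : A, B (mul x y) (mul x y) = B x x * B y y)
    (hassoc : ∀ x y z : A, B (mul x y) z = B x (mul y z))
    (a : Fin 3 → A)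
    (hSig : ∀ j : Fin 3, mul (a j) (a (j + 1)) = a (j + 2) ∧ B (a j) (a j) = 1)
    (p : Fin 3 → A)
    (hLam : ∀ j : Fin 3,
      mul (a j) (p (j + 1)) + mul (p j) (a (j + 1)) = p (j + 2) ∧
      B (p j) (a j) = 0)
    (q : Fin 3 → A)
    (hq : ∀ j : Fin 3, q j = mul (a (j + 1)) (p (j + 2)))
    (D : Fin 3 → A → A)
    (hD : ∀ (j : Fin 3) (x : A),
      D j x = mul (mul (p (j + 1)) x) (a (j + 1)) + mul (a j) (mul x (q j))) :
    ∀ (j : Fin 3) (x : A),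
      D j x = (2 * B (q (j + 2)) x) • a (j + 2) - (2 * B (a (j + 2)) x) • q (j + 2)
        + mul (a j) (mul x (p j)) ∧
      D j x = (2 * B (p (j + 2)) x) • a (j + 2) - (2 * B (a (j + 2)) x) • p (j + 2)
        + mul (mul (q (j + 1)) x) (a (j + 1)) := by
  -- Linearized composition identities
  have L1 : ∀ x y z : A, mul (mul x y) z + mul (mul z y) x = (2 * B x z) • y := by
    intro x y z
    have h := hcomp₁ (x + z) y
    simp only [map_add, LinearMap.add_apply] at h
    rw [hcomp₁ x y, hcomp₁ z y, hBsymm z x] at h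
    have h3 : mul (mul x y) z + mul (mul z y) x
        = (B x x + B x z + (B x z + B z z)) • y - B x x • y - B z z • y := by
      rw [← h]; abel
    rw [h3]; module
  have L2 : ∀ x y z : A, mul x (mul y z) + mul z (mul y x) = (2 * B x z) • y := by
    intro x y z
    have h := hcomp₂ (x + z) y
    simp only [map_add, LinearMap.add_apply] at h
    rw [hcomp₂ x y, hcomp₂ z y, hBsymm z x] at h
    have h3 : mul x (mul y z) + mul z (mul y x)
        = (B x x + B x z + (B x z + B z z)) • y - B x x • y - B z z • y := by
      rw [← h]; abel
    rw [h3]; module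
  intro j x
  have e1 : ∀ k : Fin 3, k + 1 + 1 = k + 2 := by decide
  have e2 : ∀ k : Fin 3, k + 2 + 1 = k := by decide
  have e3 : ∀ k : Fin 3, k + 2 + 2 = k + 1 := by decide
  have e4 : ∀ k : Fin 3, k + 1 + 2 = k := by decide
  have hA12 : mul (a j) (a (j + 1)) = a (j + 2) := (hSig j).1
  have hA31 : mul (a (j + 2)) (a j) = a (j + 1) := by
    have h := (hSig (j + 2)).1
    rwa [e2, e3] at h
  have hBp3a3 : B (p (j + 2)) (a (j + 2)) = 0 := (hLam (j + 2)).2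
  have hq1 : q j = p j - mul (p (j + 1)) (a (j + 2)) := by
    have h := (hLam (j + 1)).1
    rw [e1, e4] at h
    rw [hq j]
    exact eq_sub_of_add_eq h
  have hq2 : q (j + 1) = p (j + 1) - mul (p (j + 2)) (a j) := by
    have h := (hLam (j + 2)).1
    rw [e2, e3] at h
    rw [hq (j + 1), e1, e4]
    exact eq_sub_of_add_eq h
  have hq3 : q (j + 2) = mul (a j) (p (j + 1)) := by rw [hq (j + 2), e2, e3]
  constructor
  · -- first alternative formula
    rw [hD j x, hq1, hq3]
    have hL2a := L2 x (p (j + 1)) (a (j + 2))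
    have hL2b := L2 (a j) (a (j + 2)) (mul (p (j + 1)) x)
    rw [hA31, ← hassoc (a j) (p (j + 1)) x] at hL2b
    have k1 : mul (a j) (mul x (mul (p (j + 1)) (a (j + 2))))
        = (2 * B x (a (j + 2))) • mul (a j) (p (j + 1))
          - ((2 * B (mul (a j) (p (j + 1))) x) • a (j + 2)
             - mul (mul (p (j + 1)) x) (a (j + 1))) := by
      rw [eq_sub_of_add_eq hL2a, map_sub, map_smul, eq_sub_of_add_eq hL2b]
    rw [map_sub (mul x), map_sub (mul (a j)), k1, hBsymm x (a (j + 2))]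
    abel
  · -- second alternative formula
    rw [hD j x, hq j, hq2]
    have hu : B (mul (p (j + 2)) (a j)) (a (j + 1)) = 0 := by
      rw [hassoc, hA12, hBp3a3]
    have s1 := L1 (mul (p (j + 2)) (a j)) x (a (j + 1))
    rw [hu] at s1
    have s1' : mul (mul (mul (p (j + 2)) (a j)) x) (a (j + 1))
        = - mul (mul (a (j + 1)) x) (mul (p (j + 2)) (a j)) := by
      have := eq_sub_of_add_eq s1
      rw [this]
      simp
    have s2 := L2 x (a (j + 1)) (p (j + 2))
    have s3 := L2 (a j) (p (j + 2)) (mul (a (j + 1)) x)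
    rw [← hassoc (a j) (a (j + 1)) x, hA12] at s3
    have k2 : mul (a j) (mul x (mul (a (j + 1)) (p (j + 2))))
        = (2 * B x (p (j + 2))) • a (j + 2)
          - ((2 * B (a (j + 2)) x) • p (j + 2)
             - mul (mul (a (j + 1)) x) (mul (p (j + 2)) (a j))) := by
      rw [eq_sub_of_add_eq s2, map_sub, map_smul, hA12, eq_sub_of_add_eq s3]
    have k3 : mul (mul (p (j + 1) - mul (p (j + 2)) (a j)) x) (a (j + 1))
        = mul (mul (p (j + 1)) x) (a (j + 1))
          + mul (mul (a (j + 1)) x) (mul (p (j + 2)) (a j)) := by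
      simp only [map_sub, LinearMap.sub_apply, s1']
      abel
    rw [k2, k3, hBsymm x (p (j + 2))]
    abel
end

section
/- Let A be a symmetric composition algebra over a field F of characteristic ≠ 2 and let a ∈ A be a nontrivial idempotent: aa = a and ⟨a|a⟩ = 1. Define σ(a), θ(a) ∈ End_F(A) by σ(a)x = (xa)a and θ(a)x = a(ax). Then: (1) σ(a)(xy) = (σ(a)x)(σ(a)y) for all x, y ∈ A; (2) θ(a)(xy) = (θ(a)x)(θ(a)y) for all x, y ∈ A; (3) σ(a)θ(a) = θ(a)σ(a) = Id; (4) (σ(a))³ = (θ(a))³ = Id; (5) ⟨σ(a)x|σ(a)y⟩ = ⟨θ(a)x|θ(a)y⟩ = ⟨x|y⟩ for all x, y ∈ A. In particular, σ(a) and θ(a) are automorphisms of A of order dividing 3. -/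
/-- Theorem 4.1.  Let `a` be a nontrivial idempotent of a
symmetric composition algebra (`aa = a`, `⟨a|a⟩ = 1`), and let
`σ(a)x = (xa)a`, `θ(a)x = a(ax)`.  Then `σ(a)` and `θ(a)` are mutually inverse
isometric automorphisms of `A` of order dividing 3. -/
theorem idempotent_order_three_automorphisms
    (F : Type*) [Field F] (h2 : (2 : F) ≠ 0)
    (A : Type*) [AddCommGroup A] [Module F A]
    (mul : A →ₗ[F] A →ₗ[F] A)
    (B : LinearMap.BilinForm F A)
    (hBsymm : ∀ x y : A, B x y = B y x)
    (hBnd : B.Nondegenerate)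
    (hcomp₁ : ∀ x y : A, mul (mul x y) x = B x x • y)
    (hcomp₂ : ∀ x y : A, mul x (mul y x) = B x x • y)
    (hmult : ∀ x y : A, B (mul x y) (mul x y) = B x x * B y y)
    (hassoc : ∀ x y z : A, B (mul x y) z = B x (mul y z))
    (a : A) (hidem : mul a a = a) (hnorm : B a a = 1)
    (σ θ : A → A)
    (hσ : ∀ x : A, σ x = mul (mul x a) a)
    (hθ : ∀ x : A, θ x = mul a (mul a x)) :
    (∀ x y : A, σ (mul x y) = mul (σ x) (σ y)) ∧
    (∀ x y : A, θ (mul x y) = mul (θ x) (θ y)) ∧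
    (∀ x : A, σ (θ x) = x) ∧
    (∀ x : A, θ (σ x) = x) ∧
    (∀ x : A, σ (σ (σ x)) = x) ∧
    (∀ x : A, θ (θ (θ x)) = x) ∧
    (∀ x y : A, B (σ x) (σ y) = B x y) ∧
    (∀ x y : A, B (θ x) (θ y) = B x y) := by
  -- extensionality from nondegeneracy
  have ext : ∀ u v : A, (∀ z : A, B u z = B v z) → u = v := by
    intro u v h
    have h0 : u - v = 0 := by
      refine hBnd.1 _ (fun z => ?_)
      simp only [map_sub, LinearMap.sub_apply, h z, sub_self]
    exact sub_eq_zero.mp h0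
  -- linearizations
  have lin1 : ∀ x y z : A, mul (mul x y) z + mul (mul z y) x = (2 * B x z) • y := by
    intro x y z
    have h := hcomp₁ (x + z) y
    simp only [map_add, LinearMap.add_apply] at h
    rw [hBsymm z x] at h
    linear_combination (norm := module) h - hcomp₁ x y - hcomp₁ z y
  have lin2 : ∀ x y z : A, mul x (mul y z) + mul z (mul y x) = (2 * B x z) • y := by
    intro x y z
    have h := hcomp₂ (x + z) y
    simp only [map_add, LinearMap.add_apply] at h
    rw [hBsymm z x] at h
    linear_combination (norm := module) h - hcomp₂ x y - hcomp₂ z y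
  -- L_a, R_a inverse
  have hRL : ∀ y : A, mul (mul a y) a = y := by
    intro y; have := hcomp₁ a y; rwa [hnorm, one_smul] at this
  have hLR : ∀ y : A, mul a (mul y a) = y := by
    intro y; have := hcomp₂ a y; rwa [hnorm, one_smul] at this
  have hBa1 : ∀ x : A, B (mul x a) a = B x a := by
    intro x; rw [hassoc x a a, hidem]
  have hBa2 : ∀ x : A, B (mul a x) a = B x a := by
    intro x; rw [hassoc a x a, hBsymm a (mul x a), hBa1]
  -- alternate formulas
  have hσ' : ∀ x : A, σ x = (2 * B x a) • a - mul a x := by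
    intro x
    have h := lin1 x a a
    rw [hidem] at h
    rw [hσ]; exact eq_sub_of_add_eq h
  have hθ' : ∀ x : A, θ x = (2 * B x a) • a - mul x a := by
    intro x
    have h := lin2 a a x
    rw [hidem, hBsymm a x] at h
    rw [hθ]; exact eq_sub_of_add_eq h
  have K1 : ∀ x y : A, mul y (mul x a) = (2 * B y a) • x - mul a (mul x y) :=
    fun x y => eq_sub_of_add_eq (lin2 y x a)
  -- σθ = θσ = id
  have hσθ : ∀ x : A, σ (θ x) = x := by
    intro x; rw [hσ, hθ, hRL, hRL]
  have hθσ : ∀ x : A, θ (σ x) = x := by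
    intro x; rw [hθ, hσ, hLR, hLR]
  -- order three
  have hBσa : ∀ x : A, B (σ x) a = B x a := by
    intro x; rw [hσ x, hBa1, hBa1]
  have hBθa : ∀ x : A, B (θ x) a = B x a := by
    intro x; rw [hθ x, hBa2, hBa2]
  have hσσ : ∀ x : A, σ (σ x) = θ x := by
    intro x
    rw [hσ' (σ x), hBσa, hσ' x, map_sub, map_smul, hidem, ← hθ x]
    exact sub_sub_cancel _ _
  have hθθ : ∀ x : A, θ (θ x) = σ x := by
    intro x
    rw [hθ' (θ x), hBθa, hθ' x, map_sub, LinearMap.sub_apply, map_smul,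
      LinearMap.smul_apply, hidem, ← hσ x]
    exact sub_sub_cancel _ _
  -- isometry
  have hBσ : ∀ x y : A, B (σ x) (σ y) = B x y := by
    intro x y
    rw [hσ x, hσ y, hassoc (mul x a) a (mul (mul y a) a), hLR (mul y a),
      hassoc x a (mul y a), hLR y]
  have hBθ : ∀ x y : A, B (θ x) (θ y) = B x y := by
    intro x y
    have h := hBσ (θ x) (θ y)
    rw [hσθ x, hσθ y] at h
    exact h.symm
  -- key bilinear identities
  have hX : ∀ x y z : A, B (mul (mul a x) (mul a y)) z =
      2 * B a z * B a (mul x y) - 2 * B x a * B z (mul y a)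
        + 2 * B y a * B z x - B z (mul a (mul x y)) := by
    intro x y z
    rw [hassoc (mul a x) (mul a y) z]
    have h1 : mul (mul a y) z = (2 * B a z) • y - mul (mul z y) a :=
      eq_sub_of_add_eq (lin1 a y z)
    rw [h1, map_sub, map_smul, smul_eq_mul, hassoc a x y,
      hBsymm (mul a x) (mul (mul z y) a), hassoc (mul z y) a (mul a x), ← hθ x, hθ' x,
      map_sub, map_smul, smul_eq_mul, hassoc z y a, hassoc z y (mul x a), K1 x y,
      map_sub, map_smul, smul_eq_mul]
    ring
  have hY : ∀ x y z : A, B (mul (mul x a) (mul y a)) z =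
      2 * B y z * B x a - 2 * B y a * B z (mul a x)
        + 2 * B (mul x y) a * B z a - B z (mul (mul x y) a) := by
    intro x y z
    rw [hassoc (mul x a) (mul y a) z]
    have h1 : mul (mul y a) z = (2 * B y z) • a - mul (mul z a) y :=
      eq_sub_of_add_eq (lin1 y a z)
    rw [h1, map_sub, map_smul, smul_eq_mul, hBa1 x,
      hBsymm (mul x a) (mul (mul z a) y), hassoc (mul z a) y (mul x a), K1 x y,
      map_sub, map_smul, smul_eq_mul, hassoc z a x,
      hassoc z a (mul a (mul x y)), ← hθ (mul x y), hθ' (mul x y),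
      map_sub, map_smul, smul_eq_mul]
    ring
  -- automorphism properties
  have hσmul : ∀ x y : A, σ (mul x y) = mul (σ x) (σ y) := by
    intro x y
    apply ext
    intro z
    rw [hσ' (mul x y), hσ' x, hσ' y]
    simp only [map_sub, map_smul, LinearMap.sub_apply, LinearMap.smul_apply,
      smul_eq_mul, hidem]
    rw [hX x y z, hRL x]
    have h2 : mul a (mul a y) = (2 * B y a) • a - mul y a := by rw [← hθ, hθ']
    rw [h2]
    simp only [map_sub, map_smul, LinearMap.sub_apply, LinearMap.smul_apply,
      smul_eq_mul]
    linear_combination (2 * B (mul x y) a) * hBsymm a z + (2 * B y a) * hBsymm x z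
      - (2 * B x a) * hBsymm (mul y a) z + (2 * B a (mul x y)) * hBsymm a z
      + hBsymm (mul a (mul x y)) z + (2 * B z a) * hBsymm (mul x y) a
      + (4 * B a (mul x y)) * hBsymm z a - 2 * hBsymm (mul a (mul x y)) z
  have hθmul : ∀ x y : A, θ (mul x y) = mul (θ x) (θ y) := by
    intro x y
    apply ext
    intro z
    rw [hθ' (mul x y), hθ' x, hθ' y]
    simp only [map_sub, map_smul, LinearMap.sub_apply, LinearMap.smul_apply,
      smul_eq_mul, hidem]
    rw [hY x y z, hLR y]
    have h2 : mul (mul x a) a = (2 * B x a) • a - mul a x := by rw [← hσ, hσ']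
    rw [h2]
    simp only [map_sub, map_smul, LinearMap.sub_apply, LinearMap.smul_apply,
      smul_eq_mul]
    linear_combination (2 * B (mul x y) a) * hBsymm a z - (2 * B y a) * hBsymm (mul a x) z
      + (2 * B x a) * hBsymm y z + (2 * B (mul x y) a) * hBsymm z a
      + hBsymm (mul (mul x y) a) z + (2 * B (mul x y) a) * hBsymm a z
      + (2 * B x a) * hBsymm z y - 2 * hBsymm (mul (mul x y) a) z
  exact ⟨hσmul, hθmul, hσθ, hθσ,
    fun x => by rw [hσσ x, hσθ x],
    fun x => by rw [hθθ x, hθσ x],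
    hBσ, hBθ⟩
end

section
/- Let A* be a Hurwitz algebra over a field F of characteristic ≠ 2 with unit e, and let a ∈ A* satisfy ⟨a|a⟩ = 1 and 2⟨e|a⟩ = −1. Define σ(a) ∈ End_F(A*) by σ(a)x = ā*(x*a), where x̄ = 2⟨e|x⟩e − x. Then: (i) ā*(x*a) = (ā*x)*a for all x; (ii) σ(a)(x*y) = (σ(a)x)*(σ(a)y) for all x, y ∈ A*; (iii) σ(a)∘σ(ā) = Id; (iv) (σ(a))³ = Id; (v) ⟨σ(a)x|σ(a)y⟩ = ⟨x|y⟩ for all x, y ∈ A*. In particular σ(a) is an automorphism of A*. -/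
/-- Corollary 4.2.  Let `A*` be a Hurwitz algebra with unit
`e` and let `a` satisfy `⟨a|a⟩ = 1`, `2⟨e|a⟩ = −1`.  With the conjugation
`x̄ = 2⟨e|x⟩e − x` and `σ(a)x = ā*(x*a)`, the map `σ(a)` is an isometric
automorphism of `A*` with `σ(a)σ(ā) = Id` and `σ(a)³ = Id`; moreover
`ā*(x*a) = (ā*x)*a`. -/
theorem hurwitz_sigma_automorphism
    (F : Type*) [Field F] (h2 : (2 : F) ≠ 0)
    (A : Type*) [AddCommGroup A] [Module F A]
    (mul : A →ₗ[F] A →ₗ[F] A)   -- the Hurwitz product x*y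
    (B : LinearMap.BilinForm F A)
    (hBsymm : ∀ x y : A, B x y = B y x)
    (hBnd : B.Nondegenerate)
    (e : A) (hel : ∀ x : A, mul e x = x) (her : ∀ x : A, mul x e = x)
    (hcl : ∀ x y : A, B (mul x y) (mul x y) = B x x * B y y)
    -- quadratic relation x*x = 2⟨e|x⟩x − ⟨x|x⟩e
    (hquad : ∀ x : A, mul x x = (2 * B e x) • x - B x x • e)
    -- the conjugation x̄ = 2⟨e|x⟩e − x
    (conj : A → A) (hconj : ∀ x : A, conj x = (2 * B e x) • e - x)
    (hconjmul : ∀ x y : A, conj (mul x y) = mul (conj y) (conj x))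
    -- the para-product xy := conj(x*y) makes A* a symmetric composition algebra
    (pmul : A → A → A) (hpmul : ∀ x y : A, pmul x y = conj (mul x y))
    (hpc₁ : ∀ x y : A, pmul (pmul x y) x = B x x • y)
    (hpc₂ : ∀ x y : A, pmul x (pmul y x) = B x x • y)
    (hpassoc : ∀ x y z : A, B (pmul x y) z = B x (pmul y z))
    (a : A) (hnorm : B a a = 1) (htrace : 2 * B e a = -1)
    (σ σ' : A → A)
    (hσ : ∀ x : A, σ x = mul (conj a) (mul x a))
    (hσ' : ∀ x : A, σ' x = mul (conj (conj a)) (mul x (conj a))) :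
    (∀ x : A, mul (conj a) (mul x a) = mul (mul (conj a) x) a) ∧
    (∀ x y : A, σ (mul x y) = mul (σ x) (σ y)) ∧
    (∀ x : A, σ (σ' x) = x) ∧
    (∀ x : A, σ (σ (σ x)) = x) ∧
    (∀ x y : A, B (σ x) (σ y) = B x y) := by
  
  -- ### basic nondegeneracy facts
  have hane : a ≠ 0 := by
    intro h
    rw [h] at hnorm
    simp only [map_zero, LinearMap.zero_apply] at hnorm
    exact one_ne_zero hnorm.symm
  have hene : e ≠ 0 := by
    intro h
    apply hane
    have h0 := hel a
    rw [h] at h0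
    simpa using h0.symm
  have hBee : B e e = 1 := by
    have h := hquad e
    rw [hel e] at h
    have h2' : (B e e - 1) • e = 0 := by linear_combination (norm := module) -h
    rcases smul_eq_zero.mp h2' with hc | hc
    · linear_combination hc
    · exact absurd hc hene
  -- ### conjugation is linear and involutive
  have hconjadd : ∀ x y : A, conj (x + y) = conj x + conj y := by
    intro x y
    rw [hconj, hconj, hconj, map_add]
    module
  have hconjsmul : ∀ (c : F) (x : A), conj (c • x) = c • conj x := by
    intro c x
    rw [hconj, hconj, map_smul, smul_eq_mul]
    module
  have hcc : ∀ x : A, conj (conj x) = x := by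
    intro x
    rw [hconj, hconj]
    have hs : B e ((2 * B e x) • e - x) = B e x := by
      rw [map_sub, map_smul, hBee, smul_eq_mul]; ring
    rw [hs]
    module
  have hBconj : ∀ x y : A, B (conj x) (conj y) = B x y := by
    intro x y
    rw [hconj, hconj]
    simp only [map_sub, map_smul, LinearMap.sub_apply, LinearMap.smul_apply,
      smul_eq_mul, hBee]
    linear_combination (2 * B e y) * hBsymm e x
  have hca : conj a = -e - a := by
    rw [hconj, htrace]
    module
  have hmulaa : mul a a = conj a := by
    rw [hquad a, htrace, hnorm, hca]
    module
  have haa' : mul (conj a) (conj a) = a := by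
    have h := hconjmul a a
    rw [hmulaa, hcc] at h
    exact h.symm
  -- ### linearized quadratic relation
  have linquad : ∀ x y : A, mul x y + mul y x
      = (2 * B e x) • y + (2 * B e y) • x - (2 * B x y) • e := by
    intro x y
    have h := hquad (x + y)
    simp only [map_add, LinearMap.add_apply] at h
    have hsym : (B y x) • (e : A) = (B x y) • e := by rw [hBsymm y x]
    linear_combination (norm := module) h - hquad x - hquad y - hsym
  -- ### L1 / R1 : x̄*(x*y) = n(x) y and (y*x)*x̄ = n(x) y
  have L1' : ∀ x y : A, mul x (mul (conj x) y) = (B x x) • y := by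
    intro x y
    have h := hpc₂ x (conj y)
    rw [hpmul, hpmul] at h
    rw [hconjmul (conj y) x] at h
    rw [hcc y] at h
    have h2' := congrArg conj h
    rw [hcc, hconjsmul, hcc] at h2'
    exact h2'
  have L1 : ∀ x y : A, mul (conj x) (mul x y) = (B x x) • y := by
    intro x y
    have h := L1' (conj x) y
    rw [hcc, hBconj] at h
    exact h
  have R1' : ∀ x y : A, mul (mul y (conj x)) x = (B x x) • y := by
    intro x y
    have h := hpc₁ x (conj y)
    rw [hpmul, hpmul] at h
    rw [hconjmul x (conj y)] at h
    rw [hcc y] at h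
    have h2' := congrArg conj h
    rw [hcc, hconjsmul, hcc] at h2'
    exact h2'
  have R1 : ∀ x y : A, mul (mul y x) (conj x) = (B x x) • y := by
    intro x y
    have h := R1' (conj x) y
    rw [hcc, hBconj] at h
    exact h
  -- ### linearizations L2 / R2
  have L2 : ∀ x w y : A, mul (conj x) (mul w y) + mul (conj w) (mul x y)
      = (2 * B x w) • y := by
    intro x w y
    have h := L1 (x + w) y
    rw [hconjadd] at h
    simp only [map_add, LinearMap.add_apply] at h
    rw [L1 x y, L1 w y] at h
    have hsym : (B w x) • y = (B x w) • y := by rw [hBsymm w x]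
    linear_combination (norm := module) h + hsym
  have R2 : ∀ x w y : A, mul (mul y x) (conj w) + mul (mul y w) (conj x)
      = (2 * B x w) • y := by
    intro x w y
    have h := R1 (x + w) y
    rw [hconjadd] at h
    simp only [map_add, LinearMap.add_apply] at h
    rw [R1 x y, R1 w y] at h
    have hsym : (B w x) • y = (B x w) • y := by rw [hBsymm w x]
    linear_combination (norm := module) h + hsym
  -- ### part (i)
  have parti : ∀ x : A, mul (conj a) (mul x a) = mul (mul (conj a) x) a := by
    intro x
    have e1 := L2 x a a
    rw [hmulaa] at e1
    have hxca : mul (conj x) (conj a) = -(conj x) - mul (conj x) a := by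
      rw [hca, map_sub, map_neg, her]
    rw [hxca] at e1
    have e2 := R2 x (conj a) (conj a)
    rw [hcc, haa'] at e2
    have sxa : B x (conj a) = -(B e x) - B x a := by
      rw [hca, map_sub, map_neg, hBsymm x e]
    rw [sxa] at e2
    have lq := linquad a (conj x)
    rw [htrace] at lq
    have s1 : B e (conj x) = B e x := by
      rw [hconj, map_sub, map_smul, smul_eq_mul, hBee]; ring
    rw [s1] at lq
    have s2 : B a (conj x) = -(B e x) - B a x := by
      rw [hconj, map_sub, map_smul, smul_eq_mul]
      linear_combination (B e x) * htrace + 2 * (B e x) * hBsymm a e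
    rw [s2] at lq
    have hsax : (2 * B a x) • (e : A) = (2 * B x a) • e := by rw [hBsymm a x]
    have hca2 : (2 * B e x + 2 * B x a) • (conj a)
        = (2 * B e x + 2 * B x a) • (-e - a : A) := by rw [hca]
    linear_combination (norm := module) e1 - e2 + lq + hca2 + hsax
  -- ### pmul basics
  have hpadd_l : ∀ x y z : A, pmul (x + y) z = pmul x z + pmul y z := by
    intro x y z
    rw [hpmul, hpmul, hpmul, map_add, LinearMap.add_apply, hconjadd]
  have hpadd_r : ∀ x y z : A, pmul x (y + z) = pmul x y + pmul x z := by
    intro x y z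
    rw [hpmul, hpmul, hpmul, map_add, hconjadd]
  have idem : pmul a a = a := by rw [hpmul, hmulaa, hcc]
  have LRid : ∀ u : A, pmul a (pmul u a) = u := by
    intro u
    have h := hpc₂ a u
    rw [hnorm, one_smul] at h
    exact h
  have hS1 : ∀ x y z : A, pmul (pmul x y) z + pmul (pmul z y) x = (2 * B x z) • y := by
    intro x y z
    have h := hpc₁ (x + z) y
    simp only [hpadd_l, hpadd_r, map_add, LinearMap.add_apply] at h
    rw [hpc₁ x y, hpc₁ z y] at h
    have hsym : (B z x) • y = (B x z) • y := by rw [hBsymm z x]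
    linear_combination (norm := module) h + hsym
  have hS2 : ∀ x y z : A, pmul x (pmul y z) + pmul z (pmul y x) = (2 * B x z) • y := by
    intro x y z
    have h := hpc₂ (x + z) y
    simp only [hpadd_l, hpadd_r, map_add, LinearMap.add_apply] at h
    rw [hpc₂ x y, hpc₂ z y] at h
    have hsym : (B z x) • y = (B x z) • y := by rw [hBsymm z x]
    linear_combination (norm := module) h + hsym
  have hBRa : ∀ u : A, B (pmul u a) a = B u a := by
    intro u
    rw [hpassoc, idem]
  have hLf : ∀ x : A, pmul a x = (2 * B x a) • a - pmul (pmul x a) a := by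
    intro x
    have h := hS1 x a a
    rw [idem] at h
    linear_combination (norm := module) h
  have hτ : ∀ x : A, pmul (pmul (pmul x a) a) a = (2 * B x a) • a - x := by
    intro x
    have h := hS1 (pmul x a) a a
    rw [idem, LRid x, hBRa x] at h
    linear_combination (norm := module) h
  -- exchange identity for pmul
  have hE : ∀ x y w z : A, B (pmul x y) (pmul w z)
      = 2 * (B x w) * (B y z) - B (pmul w y) (pmul x z) := by
    intro x y w z
    rw [hpassoc x y (pmul w z)]
    rw [eq_sub_of_add_eq (hS2 y w z)]
    rw [map_sub, map_smul, smul_eq_mul]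
    rw [← hpassoc x z (pmul w y)]
    rw [hBsymm (pmul x z) (pmul w y)]
    ring
  -- ### multiplicativity at the pmul level
  have hmultp : ∀ x y : A, pmul (pmul (pmul x y) a) a
      = pmul (pmul (pmul x a) a) (pmul (pmul y a) a) := by
    intro x y
    have main : ∀ t : A, B (pmul (pmul (pmul x a) a) (pmul (pmul y a) a)) t
        = B (pmul (pmul (pmul x y) a) a) t := by
      intro t
      have c3 : B (pmul (pmul y a) a) (pmul t a) = B (pmul y a) t := by
        rw [hpassoc (pmul y a) a (pmul t a), LRid t]
      have c6 : B a (pmul t a) = B t a := by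
        rw [hBsymm a (pmul t a), hBRa t]
      have c12 : B y (pmul (pmul x a) a) = 2 * (B x a) * (B y a) - B (pmul x y) a := by
        rw [hBsymm y (pmul (pmul x a) a), hpassoc (pmul x a) a y, hLf y]
        rw [map_sub, map_smul, smul_eq_mul, hBRa x]
        rw [hpassoc x a (pmul (pmul y a) a), LRid (pmul y a), ← hpassoc x y a]
        ring
      have c9 : B a (pmul y (pmul t a)) = 2 * (B y a) * (B t a) - B t (pmul y a) := by
        rw [hBsymm a (pmul y (pmul t a)), hpassoc y (pmul t a) a]
        rw [hBsymm y (pmul (pmul t a) a), hpassoc (pmul t a) a y, hLf y]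
        rw [map_sub, map_smul, smul_eq_mul, hBRa t]
        rw [hpassoc t a (pmul (pmul y a) a), LRid (pmul y a)]
      have c11 : B x (pmul y (pmul t a))
          = 2 * (B (pmul x y) a) * (B t a) - B t (pmul (pmul (pmul x y) a) a) := by
        rw [← hpassoc x y (pmul t a), hBsymm (pmul x y) (pmul t a)]
        rw [hpassoc t a (pmul x y), hLf (pmul x y)]
        rw [map_sub, map_smul, smul_eq_mul]
      conv_lhs => rw [← LRid t]
      rw [hE (pmul (pmul x a) a) (pmul (pmul y a) a) a (pmul t a)]
      rw [LRid (pmul y a)]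
      rw [hE y a (pmul (pmul x a) a) (pmul t a)]
      rw [hτ x]
      simp only [map_sub, map_smul, LinearMap.sub_apply, LinearMap.smul_apply,
        smul_eq_mul]
      rw [hBRa (pmul x a), hBRa x, c3, c6, c12, c9, c11]
      linear_combination (2 * (B x a)) * (hBsymm (pmul y a) t)
        + hBsymm t (pmul (pmul (pmul x y) a) a)
    have hsub : pmul (pmul (pmul x a) a) (pmul (pmul y a) a)
        - pmul (pmul (pmul x y) a) a = 0 := by
      apply hBnd.1
      intro n
      rw [map_sub, LinearMap.sub_apply, main n, sub_self]
    exact (sub_eq_zero.mp hsub).symm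
  -- ### σ in pmul terms
  have pσ : ∀ x : A, σ x = pmul (pmul x a) a := by
    intro x
    rw [hσ, hpmul, hpmul, hconjmul, hcc]
  have hσconj : ∀ x : A, σ (conj x) = conj (σ x) := by
    intro x
    rw [hσ, hσ, hconjmul, hconjmul, hcc]
    exact parti (conj x)
  -- ### part (ii)
  have hii : ∀ x y : A, σ (mul x y) = mul (σ x) (σ y) := by
    intro x y
    have hmxy : mul x y = conj (pmul x y) := by rw [hpmul, hcc]
    rw [hmxy, hσconj, pσ (pmul x y), hmultp x y, ← pσ x, ← pσ y,
      hpmul (σ x) (σ y), hcc]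
  -- ### part (iii)
  have hiii : ∀ x : A, σ (σ' x) = x := by
    intro x
    rw [hσ', hcc, hσ]
    rw [parti (mul a (mul x (conj a)))]
    have hL1a : ∀ y : A, mul (conj a) (mul a y) = y := by
      intro y
      rw [L1 a y, hnorm, one_smul]
    rw [hL1a]
    have h := R1 (conj a) x
    rw [hcc, hBconj, hnorm, one_smul] at h
    exact h
  -- ### part (iv)
  have hiv : ∀ x : A, σ (σ (σ x)) = x := by
    intro x
    rw [pσ, pσ, pσ]
    rw [hτ x]
    rw [hτ ((2 * B x a) • a - x)]
    simp only [map_sub, map_smul, LinearMap.sub_apply, LinearMap.smul_apply,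
      smul_eq_mul, hnorm]
    module
  -- ### part (v)
  have hv : ∀ x y : A, B (σ x) (σ y) = B x y := by
    intro x y
    rw [pσ x, pσ y, hpassoc (pmul x a) a, LRid (pmul y a), hpassoc x a, LRid y]
  exact ⟨parti, hii, hiii, hiv, hv⟩
end

section
/- Let A* be a Hurwitz algebra over a field F of characteristic ≠ 2 with unit e, and write xy := conj(x*y) = ȳ*x̄ for the para-product. Let a, p ∈ A* satisfy ⟨a|a⟩ = 1, 2⟨a|e⟩ = −1, ⟨a|p⟩ = 0, and ap + pa = p, and set q = ap. Then: (1) ⟨p|p⟩ = ⟨q|q⟩ = 2⟨p|q⟩ and ⟨p|a⟩ = ⟨q|a⟩ = 0; (2) ⟨p|e⟩ = ⟨q|e⟩ = 0 and ā = −e − a; (3) q = −p*ā = −a*p and p = −ā*q = −q*a; (4) q*p = ⟨p|p⟩a and p*q = ⟨p|p⟩ā. -/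
/-- Lemma 4.4.  Let `A*` be a Hurwitz algebra with unit `e`
and para-product `xy = conj(x*y)`.  If `⟨a|a⟩ = 1`, `2⟨a|e⟩ = −1`, `⟨a|p⟩ = 0`
and `ap + pa = p` (para-products), and `q = ap`, then:
(1) `⟨p|p⟩ = ⟨q|q⟩ = 2⟨p|q⟩`, `⟨p|a⟩ = ⟨q|a⟩ = 0`;
(2) `⟨p|e⟩ = ⟨q|e⟩ = 0`, `ā = −e − a`;
(3) `q = −p*ā = −a*p`, `p = −ā*q = −q*a`;
(4) `q*p = ⟨p|p⟩a`, `p*q = ⟨p|p⟩ā`. -/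
theorem hurwitz_constrained_relations
    (F : Type*) [Field F] (h2 : (2 : F) ≠ 0)
    (A : Type*) [AddCommGroup A] [Module F A]
    (mul : A →ₗ[F] A →ₗ[F] A)   -- the Hurwitz product x*y
    (B : LinearMap.BilinForm F A)
    (hBsymm : ∀ x y : A, B x y = B y x)
    (hBnd : B.Nondegenerate)
    (e : A) (hel : ∀ x : A, mul e x = x) (her : ∀ x : A, mul x e = x)
    (hcl : ∀ x y : A, B (mul x y) (mul x y) = B x x * B y y)
    (hquad : ∀ x : A, mul x x = (2 * B e x) • x - B x x • e)
    (conj : A → A) (hconj : ∀ x : A, conj x = (2 * B e x) • e - x)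
    (hconjmul : ∀ x y : A, conj (mul x y) = mul (conj y) (conj x))
    (pmul : A → A → A) (hpmul : ∀ x y : A, pmul x y = conj (mul x y))
    (hpc₁ : ∀ x y : A, pmul (pmul x y) x = B x x • y)
    (hpc₂ : ∀ x y : A, pmul x (pmul y x) = B x x • y)
    (hpassoc : ∀ x y z : A, B (pmul x y) z = B x (pmul y z))
    (a p q : A)
    (hnorm : B a a = 1) (htrace : 2 * B a e = -1)
    (haporth : B a p = 0)
    (hap : pmul a p + pmul p a = p)
    (hqdef : q = pmul a p) :
    (B p p = B q q ∧ B q q = 2 * B p q ∧ B p a = 0 ∧ B q a = 0) ∧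
    (B p e = 0 ∧ B q e = 0 ∧ conj a = -e - a) ∧
    (q = -(mul p (conj a)) ∧ q = -(mul a p) ∧
      p = -(mul (conj a) q) ∧ p = -(mul q a)) ∧
    (mul q p = B p p • a ∧ mul p q = B p p • conj a) := by
  -- norm of the unit
  have hBee : B e e = 1 := by
    have h := hcl e a
    rw [hel a, hnorm] at h
    linear_combination -h
  have h2ea : 2 * B e a = -1 := by rw [hBsymm e a]; exact htrace
  have hBpa : B p a = 0 := (hBsymm p a).trans haporth
  -- conjugation facts
  have hca : conj a = -e - a := by rw [hconj a, h2ea]; module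
  have hconjconj : ∀ x : A, conj (conj x) = x := by
    intro x
    simp only [hconj, map_sub, map_smul, smul_eq_mul, hBee, mul_one]
    module
  have hcadd : ∀ x y : A, conj (x + y) = conj x + conj y := by
    intro x y; simp only [hconj, map_add]; module
  have hcsub : ∀ x y : A, conj (x - y) = conj x - conj y := by
    intro x y; simp only [hconj, map_sub]; module
  have hcneg : ∀ x : A, conj (-x) = -conj x := by
    intro x; simp only [hconj, map_neg]; module
  have hcsmul : ∀ (c : F) (x : A), conj (c • x) = c • conj x := by
    intro c x; simp only [hconj, map_smul, smul_eq_mul]; module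
  have hce : conj e = e := by rw [hconj, hBee]; module
  have hBcc : ∀ u v : A, B (conj u) (conj v) = B u v := by
    intro u v
    simp only [hconj, map_sub, map_smul, LinearMap.sub_apply, LinearMap.smul_apply,
      smul_eq_mul, hBee, mul_one]
    rw [hBsymm u e]
    ring
  -- linearized quadratic relation
  have hlin : ∀ x y : A, mul x y + mul y x
      = (2 * B e x) • y + (2 * B e y) • x - (2 * B x y) • e := by
    intro x y
    have h := hquad (x + y)
    simp only [map_add, LinearMap.add_apply] at h
    rw [hquad x, hquad y, hBsymm y x] at h
    linear_combination (norm := module) h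
  -- para-product bilinearity
  have hpadd1 : ∀ x y z : A, pmul (x + y) z = pmul x z + pmul y z := by
    intro x y z; simp only [hpmul, map_add, LinearMap.add_apply, hcadd]
  have hpadd2 : ∀ x y z : A, pmul x (y + z) = pmul x y + pmul x z := by
    intro x y z; simp only [hpmul, map_add, hcadd]
  have hpsub2 : ∀ x y z : A, pmul x (y - z) = pmul x y - pmul x z := by
    intro x y z; simp only [hpmul, map_sub, hcsub]
  have hpsmul1 : ∀ (c : F) (x y : A), pmul (c • x) y = c • pmul x y := by
    intro c x y; simp only [hpmul, map_smul, LinearMap.smul_apply, hcsmul]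
  have hpsmul2 : ∀ (c : F) (x y : A), pmul x (c • y) = c • pmul x y := by
    intro c x y; simp only [hpmul, map_smul, hcsmul]
  -- B e p = 0
  have h0 : mul a p + mul p a = conj p := by
    have h := congrArg conj hap
    rw [hcadd] at h
    simp only [hpmul, hconjconj] at h
    exact h
  have hBep : B e p = 0 := by
    have h1 := hlin a p
    rw [h0, hconj p, h2ea, haporth] at h1
    have hkey : (2 * B e p) • (e - a) = 0 := by
      linear_combination (norm := module) h1
    rcases smul_eq_zero.mp hkey with hc | hc
    · exact (mul_eq_zero.mp hc).resolve_left h2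
    · rw [sub_eq_zero.mp hc]; exact haporth
  have hBpe : B p e = 0 := (hBsymm p e).trans hBep
  -- B e q = 0
  have hpea : pmul e a = -e - a := by rw [hpmul, hel, hca]
  have hBeq : B e q = 0 := by
    rw [hqdef, ← hpassoc e a p, hpea]
    simp only [map_sub, map_neg, LinearMap.sub_apply, LinearMap.neg_apply, hBep, haporth]
    ring
  have hBqe : B q e = 0 := (hBsymm q e).trans hBeq
  have hconjp : conj p = -p := by rw [hconj, hBep]; module
  have hconjq : conj q = -q := by rw [hconj, hBeq]; module
  -- values of pmul on basic pairs
  have hpep : pmul e p = -p := by rw [hpmul, hel, hconjp]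
  have hpae : pmul a e = -e - a := by rw [hpmul, her, hca]
  have hppe : pmul p e = -p := by rw [hpmul, her, hconjp]
  have hpa : pmul p a = p - q := by
    have h := hap
    rw [← hqdef] at h
    linear_combination (norm := module) h
  have hqa : pmul q a = p := by
    have h := hpc₁ a p
    rw [hnorm, one_smul] at h
    rw [hqdef]; exact h
  have haq : pmul a q = q - p := by
    have h := hpc₂ a p
    rw [hnorm, one_smul, hpa, hpsub2, ← hqdef] at h
    linear_combination (norm := module) -h
  have hppp : pmul p p = (-B p p) • e := by
    rw [hpmul, hquad p, hBep]
    have : (2 * (0:F)) • p - B p p • e = (-B p p) • e := by module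
    rw [this, hcsmul, hce]
  -- mul values
  have hmap : mul a p = -q := by rw [← hconjq, hqdef, hpmul, hconjconj]
  have hmpa : mul p a = q - p := by
    have h : mul p a = conj (pmul p a) := by rw [hpmul, hconjconj]
    rw [h, hpa, hcsub, hconjp, hconjq]; module
  have hmqa : mul q a = -p := by
    have h : mul q a = conj (pmul q a) := by rw [hpmul, hconjconj]
    rw [h, hqa, hconjp]
  have hmaq : mul a q = p - q := by
    have h : mul a q = conj (pmul a q) := by rw [hpmul, hconjconj]
    rw [h, haq, hcsub, hconjp, hconjq]; module
  -- part (3)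
  have g1 : q = -(mul p (conj a)) := by
    rw [hca]
    have h : mul p (-e - a) = -(mul p e) - mul p a := by
      simp only [map_sub, map_neg]
    rw [h, her, hmpa]; module
  have g2 : q = -(mul a p) := by rw [hmap, neg_neg]
  have g3 : p = -(mul (conj a) q) := by
    rw [hca]
    have h : mul (-e - a) q = -(mul e q) - mul a q := by
      simp only [map_sub, map_neg, LinearMap.sub_apply, LinearMap.neg_apply]
    rw [h, hel, hmaq]; module
  have g4 : p = -(mul q a) := by rw [hmqa, neg_neg]
  -- part (4)
  have hc4 : conj (-e - a) = a := by rw [hcsub, hcneg, hce, hca]; module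
  have hqp : pmul q p = B p p • (-e - a) := by
    have h := hpc₁ (a + p) p
    simp only [hpadd1, hpadd2, hpsmul1, map_add, LinearMap.add_apply] at h
    rw [← hqdef, hppp] at h
    simp only [hpadd1, hpadd2, hpsmul1, hqa, hpea, hpep, hnorm, haporth, hBpa] at h
    linear_combination (norm := module) h
  have hpq : pmul p q = B p p • a := by
    have h := hpc₂ (a + p) p
    simp only [map_add, LinearMap.add_apply] at h
    rw [hpadd2, hpa, hppp] at h
    simp only [hpadd1, hpadd2, hpsub2, hpsmul1, hpsmul2, hpae, hppe, hppp, ← hqdef, haq,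
      hnorm, haporth, hBpa] at h
    linear_combination (norm := module) -h
  have gqp : mul q p = B p p • a := by
    have h : mul q p = conj (pmul q p) := by rw [hpmul, hconjconj]
    rw [h, hqp, hcsmul, hc4]
  have gpq : mul p q = B p p • conj a := by
    have h : mul p q = conj (pmul p q) := by rw [hpmul, hconjconj]
    rw [h, hpq, hcsmul]
  -- part (1)
  have hBqq : B q q = B p p := by
    rw [hqdef, hpmul, hBcc, hcl, hnorm, one_mul]
  have hBppBpq : B p p = 2 * B p q := by
    have h := hpassoc p a p
    rw [hpa, ← hqdef] at h
    simp only [map_sub, LinearMap.sub_apply] at h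
    rw [hBsymm q p] at h
    linear_combination h
  have hBqa0 : B q a = 0 := by
    have h := hpassoc a p a
    rw [← hqdef, hpa] at h
    simp only [map_sub] at h
    rw [haporth, hBsymm a q] at h
    have h22 : 2 * B q a = 0 := by linear_combination h
    exact (mul_eq_zero.mp h22).resolve_left h2
  exact ⟨⟨hBqq.symm, hBqq.trans hBppBpq, hBpa, hBqa0⟩, ⟨hBpe, hBqe, hca⟩,
    ⟨g1, g2, g3, g4⟩, ⟨gqp, gpq⟩⟩
end

section
/- Let A* be any (not necessarily associative or unital) algebra over a field F of characteristic ≠ 2 with product x*y. If σ is a bijective F-linear map of A* satisfying σ(x*y) = (σx)*(σy) for all x, y and σ² = 2σ − 1, then d := σ − 1 is a derivation of A* (d(x*y) = (dx)*y + x*(dy)) satisfying d∘d = 0. Conversely, if d is an F-linear derivation of A* with d∘d = 0, then σ := d + 1 is a bijective F-linear map satisfying σ(x*y) = (σx)*(σy) for all x, y and σ² = 2σ − 1. -/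
/-- Theorem 4.8.  Let `A*` be any algebra over a field of
characteristic ≠ 2.  If `σ` is a bijective linear automorphism of `A*` with
`σ² = 2σ − 1`, then `d := σ − 1` is a derivation with `d∘d = 0`; conversely,
if `d` is a linear derivation with `d∘d = 0`, then `σ := d + 1` is a bijective
linear automorphism with `σ² = 2σ − 1`. -/
theorem automorphism_iff_square_zero_derivation
    (F : Type*) [Field F] (h2 : (2 : F) ≠ 0)
    (A : Type*) [AddCommGroup A] [Module F A]
    (mul : A →ₗ[F] A →ₗ[F] A) :
    (∀ σ : A ≃ₗ[F] A,
      (∀ x y : A, σ (mul x y) = mul (σ x) (σ y)) →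
      (∀ x : A, σ (σ x) = (2 : F) • σ x - x) →
      ((∀ x y : A, σ (mul x y) - mul x y
          = mul (σ x - x) y + mul x (σ y - y)) ∧
        (∀ x : A, σ (σ x - x) - (σ x - x) = 0))) ∧
    (∀ d : A →ₗ[F] A,
      (∀ x y : A, d (mul x y) = mul (d x) y + mul x (d y)) →
      (∀ x : A, d (d x) = 0) →
      (Function.Bijective (fun x : A => d x + x) ∧
        (∀ x y : A, d (mul x y) + mul x y = mul (d x + x) (d y + y)) ∧
        (∀ x : A, d (d x + x) + (d x + x) = (2 : F) • (d x + x) - x))) := by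
  constructor
  · intro σ hmul hsq
    constructor
    · intro x y
      have h1 : σ (σ (mul x y)) = (2 : F) • σ (mul x y) - mul x y := hsq _
      rw [hmul, hmul, hsq, hsq] at h1
      have h1e : mul ((2:F) • σ x - x) ((2:F) • σ y - y)
          = (2:F) • ((2:F) • (mul (σ x) (σ y)) - mul (σ x) y)
            - ((2:F) • (mul x (σ y)) - mul x y) := by
        simp only [map_sub, map_smul, LinearMap.sub_apply,
          LinearMap.smul_apply]
        module
      rw [h1e] at h1
      have key0 : (2:F) • ((mul (σ x) (σ y) - mul (σ x) y)
          - (mul x (σ y) - mul x y)) = 0 := by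
        have e : (2:F) • ((mul (σ x) (σ y) - mul (σ x) y)
            - (mul x (σ y) - mul x y))
            = ((2:F) • ((2:F) • (mul (σ x) (σ y)) - mul (σ x) y)
              - ((2:F) • (mul x (σ y)) - mul x y))
              - ((2:F) • (mul (σ x) (σ y)) - mul x y) := by
          module
        rw [e, h1, sub_self]
      have key : mul (σ x) (σ y) - mul (σ x) y = mul x (σ y) - mul x y :=
        sub_eq_zero.mp ((smul_eq_zero.mp key0).resolve_left h2)
      have hu : mul (σ x) (σ y) = (mul x (σ y) - mul x y) + mul (σ x) y :=
        eq_add_of_sub_eq key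
      rw [hmul]
      simp only [map_sub, LinearMap.sub_apply]
      rw [hu]
      abel
    · intro x
      rw [map_sub, hsq, two_smul]
      abel
  · intro d hd hd2
    have hz : ∀ x y : A, mul (d x) (d y) = 0 := by
      intro x y
      have h0 : d (d (mul x y)) = 0 := hd2 _
      rw [hd, map_add, hd, hd, hd2, hd2] at h0
      simp only [map_zero, LinearMap.zero_apply, zero_add, add_zero] at h0
      rw [← two_smul F] at h0
      exact (smul_eq_zero.mp h0).resolve_left h2
    refine ⟨?_, ?_, ?_⟩
    · apply Function.bijective_iff_has_inverse.mpr
      refine ⟨fun x => x - d x, fun x => ?_, fun x => ?_⟩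
      · simp only [map_add, hd2, zero_add]
        abel
      · simp only [map_sub, hd2, sub_zero]
        abel
    · intro x y
      rw [hd]
      simp only [map_add, LinearMap.add_apply, hz, zero_add]
      abel
    · intro x
      simp only [map_add, hd2, zero_add, two_smul]
      abel
end
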